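/- arXiv:2001.08045 — 14 statements merged into one kernel-verified Lean document; each statement's English description precedes it below -/
import Mathlib

section
/- Profunctor representation theorem: the end over the category of Tambara modules of the sets of functions p(a,b) → p(s,t), namely ∫_{p ∈ Tamb} Set(p(a,b), p(s,t)), is naturally isomorphic to the optic coend ∫^{m ∈ M} C(s, m̲ a) × D(m̲ b, t), for all a,s ∈ C and b,t ∈ D. -/
/-!
Profunctor representation theorem: given small categories `C`, `D`, a small monoidal
category `M` and strong monoidal actions `FC : M ⥤ [C,C]`, `FD : M ⥤ [D,D]`, the end over
the category of Tambara modules of the sets of functions `p(a,b) → p(s,t)`, i.e.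
`∫_{p ∈ Tamb} Set(p(a,b), p(s,t))`, is naturally isomorphic to the optic coend
`∫^{m ∈ M} C(s, m̲ a) × D(m̲ b, t)`, for all `a, s ∈ C` and `b, t ∈ D`.
-/

open CategoryTheory MonoidalCategory Opposite

attribute [local instance] CategoryTheory.endofunctorMonoidalCategory

universe u

variable {M : Type u} [SmallCategory M] [MonoidalCategory M]
  {C : Type u} [SmallCategory C] {D : Type u} [SmallCategory D]
  (FC : M ⥤ C ⥤ C) [FC.Monoidal] (FD : M ⥤ D ⥤ D) [FD.Monoidal]

/-- A Tambara module for the strong monoidal actions `FC`, `FD`: a profunctor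
`p : Cᵒᵖ × D ⥤ Set` with a family `α_{m,a,b} : p(a,b) → p(m̲ a, m̲ b)` natural in `a, b`,
dinatural in `m`, compatible with the unit and with the tensor of the actions
(`α_i = p(φ_i⁻¹, φ_i)` and `α_{m⊗n} = p(φ_{m,n}⁻¹, φ_{m,n}) ∘ α_n ∘ α_m`, written with the
structure morphisms of the monoidal functors). -/
structure Tambara where
  /-- the underlying profunctor -/
  p : Cᵒᵖ × D ⥤ Type u
  /-- the Tambara structure maps -/
  α : ∀ (m : M) (a : C) (b : D),
    p.obj (op a, b) → p.obj (op ((FC.obj m).obj a), (FD.obj m).obj b)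
  natural : ∀ (m : M) {a a' : C} {b b' : D} (f : a' ⟶ a) (g : b ⟶ b') (x : p.obj (op a, b)),
    α m a' b' (p.map (f.op, g) x) =
      p.map (((FC.obj m).map f).op, (FD.obj m).map g) (α m a b x)
  dinatural : ∀ {m m' : M} (h : m ⟶ m') (a : C) (b : D) (x : p.obj (op a, b)),
    p.map ((𝟙 (op ((FC.obj m).obj a)), (FD.map h).app b) :
        (op ((FC.obj m).obj a), (FD.obj m).obj b) ⟶
          (op ((FC.obj m).obj a), (FD.obj m').obj b)) (α m a b x) =
      p.map ((((FC.map h).app a).op, 𝟙 ((FD.obj m').obj b)) :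
        (op ((FC.obj m').obj a), (FD.obj m').obj b) ⟶
          (op ((FC.obj m).obj a), (FD.obj m').obj b)) (α m' a b x)
  unit : ∀ (a : C) (b : D) (x : p.obj (op a, b)),
    α (𝟙_ M) a b x =
      p.map (((Functor.OplaxMonoidal.η FC).app a).op, (Functor.LaxMonoidal.ε FD).app b) x
  mult : ∀ (m n : M) (a : C) (b : D) (x : p.obj (op a, b)),
    α (m ⊗ n) a b x =
      p.map (((Functor.OplaxMonoidal.δ FC m n).app a).op,
          (Functor.LaxMonoidal.μ FD m n).app b)
        (α n ((FC.obj m).obj a) ((FD.obj m).obj b) (α m a b x))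

/-- A morphism of Tambara modules: a natural transformation of the underlying profunctors
commuting with the Tambara structure maps. -/
structure TambaraHom (P Q : Tambara FC FD) where
  /-- the underlying natural transformation -/
  η : P.p ⟶ Q.p
  comm : ∀ (m : M) (a : C) (b : D) (x : P.p.obj (op a, b)),
    η.app (op ((FC.obj m).obj a), (FD.obj m).obj b) (P.α m a b x) =
      Q.α m a b (η.app (op a, b) x)

/-- The end `∫_{p ∈ Tamb} Set(p(a,b), p(s,t))`: families of maps `p(a,b) → p(s,t)`,
one for each Tambara module, natural (dinatural) in the Tambara module. -/
def ProfOptic (a s : C) (b t : D) : Type (u + 1) :=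
  { e : ∀ P : Tambara FC FD, P.p.obj (op a, b) → P.p.obj (op s, t) //
    ∀ (P Q : Tambara FC FD) (φ : TambaraHom FC FD P Q) (x : P.p.obj (op a, b)),
      φ.η.app (op s, t) (e P x) = e Q (φ.η.app (op a, b) x) }

/-- The generating relation of the optic coend `∫^{m ∈ M} C(s, m̲ a) × D(m̲ b, t)`. -/
def OpticRel (a s : C) (b t : D) :
    (Σ m : M, (s ⟶ (FC.obj m).obj a) × ((FD.obj m).obj b ⟶ t)) →
      (Σ m : M, (s ⟶ (FC.obj m).obj a) × ((FD.obj m).obj b ⟶ t)) → Prop :=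
  fun x y => ∃ h : x.1 ⟶ y.1,
    y.2.1 = x.2.1 ≫ (FC.map h).app a ∧ x.2.2 = (FD.map h).app b ≫ y.2.2

/-- The existential (mixed) optic: the coend `∫^{m ∈ M} C(s, m̲ a) × D(m̲ b, t)`. -/
def ExOptic (a s : C) (b t : D) : Type u := Quot (OpticRel FC FD a s b t)
section ProfRepAux

open Functor.LaxMonoidal Functor.OplaxMonoidal Functor.Monoidal

variable (a : C) (b : D)

theorem relSound {s : C} {t : D} {m m' : M} (h : m ⟶ m')
    {u : s ⟶ (FC.obj m).obj a} {v : (FD.obj m).obj b ⟶ t}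
    {u' : s ⟶ (FC.obj m').obj a} {v' : (FD.obj m').obj b ⟶ t}
    (h1 : u' = u ≫ (FC.map h).app a) (h2 : v = (FD.map h).app b ≫ v') :
    (Quot.mk (OpticRel FC FD a s b t) ⟨m, u, v⟩ : ExOptic FC FD a s b t) =
      Quot.mk _ ⟨m', u', v'⟩ :=
  Quot.sound ⟨h, h1, h2⟩

/- component-level monoidal functor lemmas -/

theorem muC_nl {n n' : M} (h : n ⟶ n') (m : M) (x : C) :
    (FC.obj m).map ((FC.map h).app x) ≫ (μ FC n' m).app x =
      (μ FC n m).app x ≫ (FC.map (h ▷ m)).app x := by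
  simpa using NatTrans.congr_app (μ_natural_left FC h m) x

theorem muC_nr {m m' : M} (n : M) (h : m ⟶ m') (x : C) :
    (FC.map h).app ((FC.obj n).obj x) ≫ (μ FC n m').app x =
      (μ FC n m).app x ≫ (FC.map (n ◁ h)).app x := by
  simpa using NatTrans.congr_app (μ_natural_right FC n h) x

theorem deltaD_nl {n n' : M} (h : n ⟶ n') (m : M) (y : D) :
    (δ FD n m).app y ≫ (FD.obj m).map ((FD.map h).app y) =
      (FD.map (h ▷ m)).app y ≫ (δ FD n' m).app y := by
  simpa using NatTrans.congr_app (δ_natural_left FD h m) y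

theorem deltaD_nr {m m' : M} (n : M) (h : m ⟶ m') (y : D) :
    (FD.map (n ◁ h)).app y ≫ (δ FD n m').app y =
      (δ FD n m).app y ≫ (FD.map h).app ((FD.obj n).obj y) := by
  simpa using NatTrans.congr_app (δ_natural_right FD n h) y

theorem assocC (n m m' : M) (x : C) :
    (δ FC m m').app ((FC.obj n).obj x) ≫ (FC.obj m').map ((μ FC n m).app x) ≫
        (μ FC (n ⊗ m) m').app x =
      (μ FC n (m ⊗ m')).app x ≫ (FC.map (α_ n m m').inv).app x := by
  have h := NatTrans.congr_app (Functor.LaxMonoidal.associativity FC n m m') x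
  simp only [endofunctorMonoidalCategory_whiskerRight_app,
    endofunctorMonoidalCategory_whiskerLeft_app, NatTrans.comp_app,
    endofunctorMonoidalCategory_associator_hom_app, Category.id_comp] at h
  have hinv : (FC.map (α_ n m m').hom).app x ≫ (FC.map (α_ n m m').inv).app x = 𝟙 _ := by
    rw [← NatTrans.comp_app, ← FC.map_comp, Iso.hom_inv_id, FC.map_id]; rfl
  have h3 : (FC.obj m').map ((μ FC n m).app x) ≫ (μ FC (n ⊗ m) m').app x
      = (μ FC m m').app ((FC.obj n).obj x) ≫ (μ FC n (m ⊗ m')).app x ≫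
          (FC.map (α_ n m m').inv).app x := by
    rw [← Category.assoc, ← h]
    simp only [Category.assoc, hinv, Category.comp_id]
  rw [h3, δ_μ_app_assoc]

theorem assocD (n m m' : M) (y : D) :
    (FD.map (α_ n m m').inv).app y ≫ (δ FD (n ⊗ m) m').app y ≫
        (FD.obj m').map ((δ FD n m).app y) ≫ (μ FD m m').app ((FD.obj n).obj y) =
      (δ FD n (m ⊗ m')).app y := by
  have h := NatTrans.congr_app (Functor.OplaxMonoidal.associativity FD n m m') y
  simp only [endofunctorMonoidalCategory_whiskerRight_app,
    endofunctorMonoidalCategory_whiskerLeft_app, NatTrans.comp_app,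
    endofunctorMonoidalCategory_associator_hom_app, Category.comp_id] at h
  have hinv : ∀ (Z : D) (g : (FD.obj (n ⊗ m ⊗ m')).obj y ⟶ Z),
      (FD.map (α_ n m m').inv).app y ≫ (FD.map (α_ n m m').hom).app y ≫ g = g := by
    intro Z g
    rw [← Category.assoc, ← NatTrans.comp_app, ← FD.map_comp, Iso.inv_hom_id, FD.map_id]
    exact Category.id_comp g
  calc (FD.map (α_ n m m').inv).app y ≫ (δ FD (n ⊗ m) m').app y ≫
        (FD.obj m').map ((δ FD n m).app y) ≫ (μ FD m m').app ((FD.obj n).obj y)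
      = (FD.map (α_ n m m').inv).app y ≫
          ((δ FD (n ⊗ m) m').app y ≫ (FD.obj m').map ((δ FD n m).app y)) ≫
          (μ FD m m').app ((FD.obj n).obj y) := by simp only [Category.assoc]
    _ = (δ FD n (m ⊗ m')).app y := by
        rw [h]
        simp only [Category.assoc, δ_μ_app, Category.comp_id, hinv]
        simp


theorem rightUnitC (n : M) (x : C) :
    (μ FC n (𝟙_ M)).app x ≫ (FC.map (ρ_ n).hom).app x = (η FC).app ((FC.obj n).obj x) := by
  have h := NatTrans.congr_app (Functor.OplaxMonoidal.right_unitality_hom FC n) x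
  simp only [NatTrans.comp_app, endofunctorMonoidalCategory_whiskerLeft_app,
    endofunctorMonoidalCategory_rightUnitor_hom_app, Category.comp_id] at h
  rw [← h, μ_δ_app_assoc]

theorem rightUnitD (n : M) (y : D) :
    (FD.map (ρ_ n).hom).app y ≫ (ε FD).app ((FD.obj n).obj y) = (δ FD n (𝟙_ M)).app y := by
  have h := NatTrans.congr_app (Functor.OplaxMonoidal.right_unitality_hom FD n) y
  simp only [NatTrans.comp_app, endofunctorMonoidalCategory_whiskerLeft_app,
    endofunctorMonoidalCategory_rightUnitor_hom_app, Category.comp_id] at h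
  rw [← h, Category.assoc, η_ε_app]
  simp

theorem leftUnitC (m : M) (x : C) :
    (FC.obj m).map ((ε FC).app x) ≫ (μ FC (𝟙_ M) m).app x ≫ (FC.map (λ_ m).hom).app x =
      𝟙 _ := by
  have h := NatTrans.congr_app (Functor.LaxMonoidal.left_unitality FC m) x
  simp only [NatTrans.comp_app, endofunctorMonoidalCategory_whiskerRight_app,
    endofunctorMonoidalCategory_leftUnitor_hom_app] at h
  exact h.symm

theorem leftUnitD (m : M) (y : D) :
    (δ FD (𝟙_ M) m).app y ≫ (FD.obj m).map ((η FD).app y) = (FD.map (λ_ m).hom).app y := by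
  have h := NatTrans.congr_app (Functor.OplaxMonoidal.left_unitality_hom FD m) y
  simp only [NatTrans.comp_app, endofunctorMonoidalCategory_whiskerRight_app,
    endofunctorMonoidalCategory_leftUnitor_hom_app, Category.comp_id] at h
  exact h

set_option linter.unusedSectionVars false

/-- action on morphisms of the optic profunctor -/
def opticMap {x x' : C} {y y' : D} (f : x' ⟶ x) (g : y ⟶ y') :
    ExOptic FC FD a x b y → ExOptic FC FD a x' b y' :=
  Quot.map (fun z => ⟨z.1, f ≫ z.2.1, z.2.2 ≫ g⟩)
    (by rintro ⟨m, u, v⟩ ⟨m', u', v'⟩ ⟨h, h1, h2⟩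
        dsimp only at h1 h2 ⊢
        exact ⟨h, by rw [h1, Category.assoc], by rw [h2, Category.assoc]⟩)

theorem opticMap_mk {x x' : C} {y y' : D} (f : x' ⟶ x) (g : y ⟶ y')
    (z : Σ m : M, (x ⟶ (FC.obj m).obj a) × ((FD.obj m).obj b ⟶ y)) :
    opticMap FC FD a b f g (Quot.mk _ z) = Quot.mk _ ⟨z.1, f ≫ z.2.1, z.2.2 ≫ g⟩ :=
  rfl

theorem opticMap_id (x : C) (y : D) (q : ExOptic FC FD a x b y) :
    opticMap FC FD a b (𝟙 x) (𝟙 y) q = q := by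
  induction q using Quot.ind with | _ z =>
  rw [opticMap_mk]
  simp
  rfl

theorem opticMap_comp {x x' x'' : C} {y y' y'' : D} (f : x' ⟶ x) (g : y ⟶ y')
    (f' : x'' ⟶ x') (g' : y' ⟶ y'') (q : ExOptic FC FD a x b y) :
    opticMap FC FD a b (f' ≫ f) (g ≫ g') q =
      opticMap FC FD a b f' g' (opticMap FC FD a b f g q) := by
  induction q using Quot.ind with | _ z =>
  rw [opticMap_mk, opticMap_mk, opticMap_mk]
  simp
  rfl

/-- The optic profunctor `(x, y) ↦ ∫^m C(x, m̲ a) × D(m̲ b, y)`. -/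
def opticProf : Cᵒᵖ × D ⥤ Type u where
  obj xy := ExOptic FC FD a xy.1.unop b xy.2
  map fg := TypeCat.ofHom (opticMap FC FD a b fg.1.unop fg.2)
  map_id xy := by ext q; exact opticMap_id FC FD a b xy.1.unop xy.2 q
  map_comp fg fg' := by
    ext q; exact opticMap_comp FC FD a b fg.1.unop fg.2 fg'.1.unop fg'.2 q

theorem opticProf_map {xy x'y' : Cᵒᵖ × D} (fg : xy ⟶ x'y') :
    (opticProf FC FD a b).map fg = TypeCat.ofHom (opticMap FC FD a b fg.1.unop fg.2) := rfl
/-- The Tambara structure map of the optic profunctor. -/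
def opticAlpha (m : M) (x : C) (y : D) :
    ExOptic FC FD a x b y → ExOptic FC FD a ((FC.obj m).obj x) b ((FD.obj m).obj y) :=
  Quot.map (fun z => ⟨z.1 ⊗ m, (FC.obj m).map z.2.1 ≫ (μ FC z.1 m).app a,
      (δ FD z.1 m).app b ≫ (FD.obj m).map z.2.2⟩)
    (by rintro ⟨n, u, v⟩ ⟨n', u', v'⟩ ⟨h, h1, h2⟩
        dsimp only at h1 h2 ⊢
        refine ⟨h ▷ m, ?_, ?_⟩
        · rw [h1, Functor.map_comp, Category.assoc, muC_nl, ← Category.assoc]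
        · rw [h2, Functor.map_comp, ← Category.assoc, ← Category.assoc, deltaD_nl,
            Category.assoc])

theorem opticAlpha_mk (m : M) (x : C) (y : D)
    (z : Σ n : M, (x ⟶ (FC.obj n).obj a) × ((FD.obj n).obj b ⟶ y)) :
    opticAlpha FC FD a b m x y (Quot.mk _ z) =
      Quot.mk _ ⟨z.1 ⊗ m, (FC.obj m).map z.2.1 ≫ (μ FC z.1 m).app a,
        (δ FD z.1 m).app b ≫ (FD.obj m).map z.2.2⟩ :=
  rfl


theorem optic_natural (m : M) {x x' : C} {y y' : D} (f : x' ⟶ x) (g : y ⟶ y')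
    (q : ExOptic FC FD a x b y) :
    opticAlpha FC FD a b m x' y' (opticMap FC FD a b f g q) =
      opticMap FC FD a b ((FC.obj m).map f) ((FD.obj m).map g)
        (opticAlpha FC FD a b m x y q) := by
  induction q using Quot.ind with | _ z =>
  obtain ⟨n, u, v⟩ := z
  rw [opticMap_mk, opticAlpha_mk, opticAlpha_mk, opticMap_mk]
  dsimp only
  simp
  rfl

theorem optic_dinatural {m m' : M} (h : m ⟶ m') (x : C) (y : D)
    (q : ExOptic FC FD a x b y) :
    opticMap FC FD a b (𝟙 ((FC.obj m).obj x)) ((FD.map h).app y)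
        (opticAlpha FC FD a b m x y q) =
      opticMap FC FD a b ((FC.map h).app x) (𝟙 ((FD.obj m').obj y))
        (opticAlpha FC FD a b m' x y q) := by
  induction q using Quot.ind with | _ z =>
  obtain ⟨n, u, v⟩ := z
  rw [opticAlpha_mk, opticAlpha_mk, opticMap_mk, opticMap_mk]
  dsimp only
  refine relSound FC FD a b (n ◁ h) ?_ ?_
  · rw [Category.id_comp, Category.assoc, ← muC_nr, ← Category.assoc,
      ← Category.assoc, (FC.map h).naturality u]
  · rw [Category.comp_id, ← Category.assoc, deltaD_nr, Category.assoc,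
      Category.assoc, (FD.map h).naturality v]

theorem optic_unit (x : C) (y : D) (q : ExOptic FC FD a x b y) :
    opticAlpha FC FD a b (𝟙_ M) x y q =
      opticMap FC FD a b (x := x) (y := y) ((η FC).app x) ((ε FD).app y) q := by
  induction q using Quot.ind with | _ z =>
  obtain ⟨n, u, v⟩ := z
  rw [opticAlpha_mk, opticMap_mk]
  dsimp only
  refine relSound FC FD a b (ρ_ n).hom ?_ ?_
  · rw [Category.assoc, rightUnitC, (η FC).naturality u]
    simp
  · rw [← rightUnitD, Category.assoc]
    congr 1
    have := (ε FD).naturality v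
    simp only [endofunctorMonoidalCategory_tensorUnit_map] at this
    rw [← this]

theorem optic_mult (m m' : M) (x : C) (y : D) (q : ExOptic FC FD a x b y) :
    opticAlpha FC FD a b (m ⊗ m') x y q =
      opticMap FC FD a b (x := (FC.obj m').obj ((FC.obj m).obj x))
        (y := (FD.obj m').obj ((FD.obj m).obj y))
        ((δ FC m m').app x) ((μ FD m m').app y)
        (opticAlpha FC FD a b m' ((FC.obj m).obj x) ((FD.obj m).obj y)
          (opticAlpha FC FD a b m x y q)) := by
  induction q using Quot.ind with | _ z =>
  obtain ⟨n, u, v⟩ := z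
  rw [opticAlpha_mk, opticAlpha_mk, opticAlpha_mk, opticMap_mk]
  dsimp only
  refine relSound FC FD a b (α_ n m m').inv ?_ ?_
  · have hnat := (δ FC m m').naturality u
    simp only [endofunctorMonoidalCategory_tensorObj_map] at hnat
    simp only [Functor.map_comp, Category.assoc]
    rw [← assocC]
    slice_rhs 1 2 => rw [hnat]
    simp only [Category.assoc]
  · have hnat := (μ FD m m').naturality v
    simp only [endofunctorMonoidalCategory_tensorObj_map] at hnat
    simp only [Functor.map_comp, Category.assoc]
    rw [hnat, ← assocD]
    simp only [Category.assoc]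

/-- The optic profunctor as a Tambara module. -/
def opticTambara : Tambara FC FD where
  p := opticProf FC FD a b
  α m x y := opticAlpha FC FD a b m x y
  natural := by
    intro m x x' y y' f g q
    exact optic_natural FC FD a b m f g q
  dinatural := by
    intro m m' h x y q
    exact optic_dinatural FC FD a b h x y q
  unit := by
    intro x y q
    exact optic_unit FC FD a b x y q
  mult := by
    intro m m' x y q
    exact optic_mult FC FD a b m m' x y q

theorem opticTambara_p : (opticTambara FC FD a b).p = opticProf FC FD a b := rfl

theorem opticTambara_alpha (m : M) (x : C) (y : D) :
    (opticTambara FC FD a b).α m x y = opticAlpha FC FD a b m x y := rfl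

/-- evaluation of an optic on a Tambara module -/
def evalQ (P : Tambara FC FD) (x : P.p.obj (op a, b)) {s : C} {t : D} :
    ExOptic FC FD a s b t → P.p.obj (op s, t) :=
  Quot.lift (fun z => P.p.map (z.2.1.op, z.2.2) (P.α z.1 a b x))
    (by
      rintro ⟨m, u, v⟩ ⟨m', u', v'⟩ ⟨h, h1, h2⟩
      dsimp only at h1 h2 ⊢
      rw [h1, h2]
      have hsplit : ((u.op, (FD.map h).app b ≫ v') :
            (op ((FC.obj m).obj a), (FD.obj m).obj b) ⟶ (op s, t)) =
          @CategoryStruct.comp (Cᵒᵖ × D) _ (op ((FC.obj m).obj a), (FD.obj m).obj b)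
            (op ((FC.obj m).obj a), (FD.obj m').obj b) (op s, t)
            (𝟙 (op ((FC.obj m).obj a)), (FD.map h).app b) (u.op, v') := by
        rw [prod_comp]
        refine Prod.ext ?_ ?_ <;> simp
      rw [hsplit, FunctorToTypes.map_comp_apply, P.dinatural h a b x,
        ← FunctorToTypes.map_comp_apply]
      refine congrArg (fun ww => P.p.map ww (P.α m' a b x)) (Prod.ext ?_ ?_)
      · simp [prod_comp, ← op_comp]
      · simp [prod_comp])

theorem evalQ_mk (P : Tambara FC FD) (x : P.p.obj (op a, b)) {s : C} {t : D}
    (z : Σ m : M, (s ⟶ (FC.obj m).obj a) × ((FD.obj m).obj b ⟶ t)) :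
    evalQ FC FD a b P x (Quot.mk _ z) = P.p.map (z.2.1.op, z.2.2) (P.α z.1 a b x) :=
  rfl

/-- evaluation as a morphism of Tambara modules -/
def evalHom (P : Tambara FC FD) (x : P.p.obj (op a, b)) :
    TambaraHom FC FD (opticTambara FC FD a b) P where
  η :=
    { app := fun xy => TypeCat.ofHom fun q => evalQ FC FD a b P x (s := xy.1.unop) (t := xy.2) q
      naturality := by
        intro xy x'y' fg
        ext q
        induction q using Quot.ind with | _ z =>
        obtain ⟨m, u, v⟩ := z
        have h0 : (opticTambara FC FD a b).p.map fg
              (Quot.mk (OpticRel FC FD a xy.1.unop b xy.2) ⟨m, u, v⟩) =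
            Quot.mk _ ⟨m, fg.1.unop ≫ u, v ≫ fg.2⟩ :=
          opticMap_mk FC FD a b fg.1.unop fg.2 ⟨m, u, v⟩
        show evalQ FC FD a b P x ((opticTambara FC FD a b).p.map fg (Quot.mk _ _)) =
          P.p.map fg (evalQ FC FD a b P x (Quot.mk _ _))
        rw [h0, evalQ_mk, evalQ_mk, ← FunctorToTypes.map_comp_apply]
        rfl }
  comm := by
    intro m x' y' q
    induction q using Quot.ind with | _ z =>
    obtain ⟨n, u, v⟩ := z
    have h0 : (opticTambara FC FD a b).α m x' y'
          (Quot.mk (OpticRel FC FD a x' b y') ⟨n, u, v⟩) =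
        Quot.mk _ ⟨n ⊗ m, (FC.obj m).map u ≫ (μ FC n m).app a,
          (δ FD n m).app b ≫ (FD.obj m).map v⟩ :=
      opticAlpha_mk FC FD a b m x' y' ⟨n, u, v⟩
    show evalQ FC FD a b P x ((opticTambara FC FD a b).α m x' y' (Quot.mk _ _)) =
      P.α m x' y' (evalQ FC FD a b P x (Quot.mk _ _))
    rw [h0, evalQ_mk, evalQ_mk]
    dsimp only
    rw [P.mult n m a b x, ← FunctorToTypes.map_comp_apply, P.natural m u v]
    refine congrArg
      (fun ww => P.p.map ww (P.α m ((FC.obj n).obj a) ((FD.obj n).obj b) (P.α n a b x)))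
      (Prod.ext ?_ ?_)
    · simp [prod_comp, ← op_comp, μ_δ_app]
    · simp [prod_comp, μ_δ_app_assoc]

/-- the identity optic -/
def idOptic : ExOptic FC FD a a b b :=
  Quot.mk _ ⟨𝟙_ M, (ε FC).app a, (η FD).app b⟩

theorem idOptic_def :
    idOptic FC FD a b = Quot.mk _ ⟨𝟙_ M, (ε FC).app a, (η FD).app b⟩ := rfl

theorem evalQ_id (P : Tambara FC FD) (x : P.p.obj (op a, b)) :
    evalQ FC FD a b P x (idOptic FC FD a b) = x := by
  rw [idOptic_def, evalQ_mk, P.unit, ← FunctorToTypes.map_comp_apply]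
  have h : ((((η FC).app a).op, (ε FD).app b) :
        (op a, b) ⟶ (op ((FC.obj (𝟙_ M)).obj a), (FD.obj (𝟙_ M)).obj b)) ≫
      ((((ε FC).app a).op, (η FD).app b) :
        (op ((FC.obj (𝟙_ M)).obj a), (FD.obj (𝟙_ M)).obj b) ⟶ (op a, b)) = 𝟙 (op a, b) := by
    rw [prod_comp, prod_id]
    refine Prod.ext ?_ ?_
    · show ((η FC).app a).op ≫ ((ε FC).app a).op = 𝟙 (op a)
      rw [← op_comp, ε_η_app]
      rfl
    · exact ε_η_app FD b
  rw [h, FunctorToTypes.map_id_apply]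

theorem right_inv_aux {s : C} {t : D} (z : ExOptic FC FD a s b t) :
    evalQ FC FD a b (opticTambara FC FD a b) (idOptic FC FD a b) z = z := by
  induction z using Quot.ind with | _ z =>
  obtain ⟨m, u, v⟩ := z
  have h0 : (opticTambara FC FD a b).α m a b (idOptic FC FD a b) =
      Quot.mk _ ⟨𝟙_ M ⊗ m, (FC.obj m).map ((ε FC).app a) ≫ (μ FC (𝟙_ M) m).app a,
        (δ FD (𝟙_ M) m).app b ≫ (FD.obj m).map ((η FD).app b)⟩ :=
    opticAlpha_mk FC FD a b m a b ⟨𝟙_ M, (ε FC).app a, (η FD).app b⟩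
  have h1 : evalQ FC FD a b (opticTambara FC FD a b) (idOptic FC FD a b)
        (Quot.mk (OpticRel FC FD a s b t) ⟨m, u, v⟩) =
      (opticTambara FC FD a b).p.map (u.op, v)
        ((opticTambara FC FD a b).α m a b (idOptic FC FD a b)) :=
    evalQ_mk FC FD a b (opticTambara FC FD a b) (idOptic FC FD a b) ⟨m, u, v⟩
  rw [h1, h0]
  have h2 : (opticTambara FC FD a b).p.map
        ((u.op, v) : (op ((FC.obj m).obj a), (FD.obj m).obj b) ⟶ (op s, t))
        (Quot.mk _ ⟨𝟙_ M ⊗ m, (FC.obj m).map ((ε FC).app a) ≫ (μ FC (𝟙_ M) m).app a,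
          (δ FD (𝟙_ M) m).app b ≫ (FD.obj m).map ((η FD).app b)⟩) =
      Quot.mk _ ⟨𝟙_ M ⊗ m, u ≫ (FC.obj m).map ((ε FC).app a) ≫ (μ FC (𝟙_ M) m).app a,
        ((δ FD (𝟙_ M) m).app b ≫ (FD.obj m).map ((η FD).app b)) ≫ v⟩ :=
    opticMap_mk FC FD a b u v _
  rw [h2]
  refine relSound FC FD a b (λ_ m).hom ?_ ?_
  · simp only [Category.assoc]
    rw [leftUnitC]
    simp
  · rw [← leftUnitD]

end ProfRepAux

/-- Profunctor representation theorem: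
`∫_{p ∈ Tamb} Set(p(a,b), p(s,t)) ≅ ∫^{m ∈ M} C(s, m̲ a) × D(m̲ b, t)`
for all `a, s ∈ C` and `b, t ∈ D`. -/
theorem profunctor_representation (a s : C) (b t : D) :
    Nonempty (ProfOptic FC FD a s b t ≃ ExOptic FC FD a s b t) := by
  refine ⟨{
    toFun := fun e => e.1 (opticTambara FC FD a b) (idOptic FC FD a b)
    invFun := fun z => ⟨fun P x => evalQ FC FD a b P x z, ?_⟩
    left_inv := ?_
    right_inv := ?_ }⟩
  · intro P Q φ x
    induction z using Quot.ind with | _ w =>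
    obtain ⟨m, u, v⟩ := w
    dsimp only
    rw [evalQ_mk, evalQ_mk, FunctorToTypes.naturality, φ.comm]
  · intro e
    refine Subtype.ext ?_
    funext P x
    exact (e.2 (opticTambara FC FD a b) P (evalHom FC FD a b P x)
        (idOptic FC FD a b)).trans
      (congrArg (e.1 P) (evalQ_id FC FD a b P x))
  · intro z
    exact right_inv_aux FC FD a b z
end

section
/- Lenses are optics for the cartesian product: in a small category C with finite products, for all objects s, t, a, b there is an isomorphism of sets ∫^{c ∈ C} C(s, c × a) × C(c × b, t) ≅ C(s, a) × C(s × b, t), natural in s, t, a, b. -/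
/-!
Lenses are optics for the cartesian product: in a small category `C` with finite products,
for all objects `s t a b` the coend `∫^{c ∈ C} C(s, c ⨯ a) × C(c ⨯ b, t)` is isomorphic to
`C(s, a) × C(s ⨯ b, t)`, naturally in `s, t, a, b`.  We realize the coend as a quotient of
`Σ c, C(s, c ⨯ a) × C(c ⨯ b, t)` by the usual coend relation, and we assert that the
*canonical* comparison map (which is natural in all four variables by construction)
is a bijection.
-/

open CategoryTheory CategoryTheory.Limits

universe u

variable {C : Type u} [SmallCategory C] [HasFiniteProducts C]

/-- The generating relation of the coend `∫^{c ∈ C} C(s, c ⨯ a) × C(c ⨯ b, t)`. -/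
def LensRel (s t a b : C) :
    (Σ c : C, (s ⟶ c ⨯ a) × (c ⨯ b ⟶ t)) → (Σ c : C, (s ⟶ c ⨯ a) × (c ⨯ b ⟶ t)) → Prop :=
  fun x y => ∃ f : x.1 ⟶ y.1,
    y.2.1 = x.2.1 ≫ prod.map f (𝟙 a) ∧ x.2.2 = prod.map f (𝟙 b) ≫ y.2.2

/-- The existential optic for the action of the cartesian product:
the coend `∫^{c ∈ C} C(s, c ⨯ a) × C(c ⨯ b, t)`. -/
def LensOptic (s t a b : C) : Type u := Quot (LensRel s t a b)

/-- The inverse map: from the coend down to concrete lenses. -/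
noncomputable def lensInv (s t a b : C) : LensOptic s t a b → (s ⟶ a) × (s ⨯ b ⟶ t) :=
  Quot.lift
    (fun x => (x.2.1 ≫ prod.snd, prod.map (x.2.1 ≫ prod.fst) (𝟙 b) ≫ x.2.2))
    (by
      rintro ⟨c, l, r⟩ ⟨c', l', r'⟩ ⟨f, h1, h2⟩
      dsimp at h1 h2 ⊢
      simp only [h1, h2]
      simp [prod.map_map_assoc, prod.map_map])

/-- Lenses are optics for the cartesian product: the canonical (natural in `s t a b`) map
from concrete lenses `C(s, a) × C(s ⨯ b, t)` to the coend `∫^{c ∈ C} C(s, c ⨯ a) × C(c ⨯ b, t)`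
is a bijection. -/
theorem lens_is_optic_for_product (s t a b : C) :
    Function.Bijective (fun vu : (s ⟶ a) × (s ⨯ b ⟶ t) =>
      (Quot.mk (LensRel s t a b) ⟨s, prod.lift (𝟙 s) vu.1, vu.2⟩ : LensOptic s t a b)) := by
  apply Function.bijective_iff_has_inverse.2
  refine ⟨lensInv s t a b, ?_, ?_⟩
  · rintro ⟨v, u⟩
    simp [lensInv]
    simp [prod.lift_snd, prod.lift_fst]
  · refine Quot.ind ?_
    rintro ⟨c, l, r⟩
    dsimp [lensInv]
    apply Quot.sound
    refine ⟨l ≫ prod.fst, ?_, rfl⟩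
    apply Limits.prod.hom_ext <;> simp
    · exact (prod.lift_fst _ _).symm
    · exact (prod.lift_snd _ _).symm
end

section
/- Prisms are optics for the coproduct: in a small category C with finite coproducts, for all objects s, t, a, b there is an isomorphism of sets ∫^{c ∈ C} C(s, c + a) × C(c + b, t) ≅ C(s, t + a) × C(b, t), natural in s, t, a, b. -/
/-!
Prisms are optics for the coproduct: in a small category `C` with finite coproducts,
for all objects `s t a b` the coend `∫^{c ∈ C} C(s, c ⨿ a) × C(c ⨿ b, t)` is isomorphic to
`C(s, t ⨿ a) × C(b, t)`, naturally in `s, t, a, b`.  We realize the coend as a quotient of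
`Σ c, C(s, c ⨿ a) × C(c ⨿ b, t)` by the usual coend relation, and we assert that the
*canonical* comparison map (natural in all four variables by construction) is a bijection.
-/

open CategoryTheory CategoryTheory.Limits

universe u

variable {C : Type u} [SmallCategory C] [HasFiniteCoproducts C]

/-- The generating relation of the coend `∫^{c ∈ C} C(s, c ⨿ a) × C(c ⨿ b, t)`. -/
def PrismRel (s t a b : C) :
    (Σ c : C, (s ⟶ c ⨿ a) × (c ⨿ b ⟶ t)) → (Σ c : C, (s ⟶ c ⨿ a) × (c ⨿ b ⟶ t)) → Prop :=
  fun x y => ∃ f : x.1 ⟶ y.1,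
    y.2.1 = x.2.1 ≫ coprod.map f (𝟙 a) ∧ x.2.2 = coprod.map f (𝟙 b) ≫ y.2.2

/-- The existential optic for the action of the coproduct:
the coend `∫^{c ∈ C} C(s, c ⨿ a) × C(c ⨿ b, t)`. -/
def PrismOptic (s t a b : C) : Type u := Quot (PrismRel s t a b)

/-- The inverse map: extract a concrete prism from a coend element. -/
noncomputable def prismInv (s t a b : C) : PrismOptic s t a b → (s ⟶ t ⨿ a) × (b ⟶ t) :=
  Quot.lift
    (fun x => (x.2.1 ≫ coprod.map (coprod.inl ≫ x.2.2) (𝟙 a), coprod.inr ≫ x.2.2))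
    (by
      rintro x y ⟨f, h1, h2⟩
      rw [h1, h2]
      congr 1
      · simp [coprod.map_map, coprod.inl_map_assoc]
      · simp)

theorem prismInv_forward (s t a b : C) (mb : (s ⟶ t ⨿ a) × (b ⟶ t)) :
    prismInv s t a b (Quot.mk (PrismRel s t a b) ⟨t, mb.1, coprod.desc (𝟙 t) mb.2⟩) = mb := by
  dsimp [prismInv]
  ext
  · simp [coprod.inl_desc]
  · simp [coprod.inr_desc]

/-- Prisms are optics for the coproduct: the canonical (natural in `s t a b`) map from
concrete prisms `C(s, t ⨿ a) × C(b, t)` to the coend `∫^{c ∈ C} C(s, c ⨿ a) × C(c ⨿ b, t)`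
is a bijection. -/

theorem prism_is_optic_for_coproduct (s t a b : C) :
    Function.Bijective (fun mb : (s ⟶ t ⨿ a) × (b ⟶ t) =>
      (Quot.mk (PrismRel s t a b) ⟨t, mb.1, coprod.desc (𝟙 t) mb.2⟩ : PrismOptic s t a b)) := by
  constructor
  · intro m1 m2 h
    have := congrArg (prismInv s t a b) h
    rwa [prismInv_forward, prismInv_forward] at this
  · rintro ⟨⟨c, f, g⟩⟩
    refine ⟨(f ≫ coprod.map (coprod.inl ≫ g) (𝟙 a), coprod.inr ≫ g), ?_⟩
    dsimp
    symm
    apply Quot.sound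
    refine ⟨coprod.inl ≫ g, rfl, ?_⟩
    apply coprod.hom_ext <;> simp [coprod.inl_desc, coprod.inr_desc]
end

section
/- Traversals are optics for power series functors: in a small cartesian closed category C with coproducts indexed by the natural numbers (over which the product distributes), for all objects s, t, a, b there is an isomorphism of sets ∫^{c ∈ [ℕ, C]} C(s, Σ_{n∈ℕ} c_n × aⁿ) × C(Σ_{n∈ℕ} c_n × bⁿ, t) ≅ C(s, Σ_{n∈ℕ} aⁿ × (bⁿ ⟹ t)), where the coend ranges over the category [ℕ, C] of functors from the discrete category of natural numbers to C. -/
/-!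
Traversals are optics for power series functors: in a small cartesian closed category `C`
with ℕ-indexed coproducts (over which products automatically distribute, the product being
a left adjoint), for all objects `s t a b` the coend
`∫^{c ∈ [ℕ,C]} C(s, Σₙ cₙ ⊗ aⁿ) × C(Σₙ cₙ ⊗ bⁿ, t)` — the coend ranging over the category
of functors from the discrete category ℕ to `C`, i.e. over families `c : ℕ → C` with
families of morphisms between them — is isomorphic to `C(s, Σₙ aⁿ ⊗ (bⁿ ⟹ t))`.
We assert that the canonical comparison map from the concrete form is a bijection.
-/

open CategoryTheory CategoryTheory.Limits CategoryTheory.MonoidalCategory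
open CategoryTheory.CartesianClosed

attribute [local instance] BraidedCategory.ofCartesianMonoidalCategory

universe u

variable {C : Type u} [SmallCategory C] [CartesianMonoidalCategory C] [MonoidalClosed C]
  [HasColimitsOfShape (Discrete ℕ) C]

/-- The `n`-fold cartesian power of an object. -/
def npow (a : C) : ℕ → C
  | 0 => 𝟙_ C
  | n + 1 => a ⊗ npow a n

/-- The generating relation of the coend
`∫^{c ∈ [ℕ,C]} C(s, ∐ₙ (cₙ ⊗ aⁿ)) × C(∐ₙ (cₙ ⊗ bⁿ), t)`; morphisms of the indexing
functor category `[ℕ, C]` (with ℕ discrete) are families `f : ∀ n, c n ⟶ c' n`. -/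
def TraversalRel (s t a b : C) :
    (Σ c : ℕ → C, (s ⟶ ∐ fun n => c n ⊗ npow a n) × ((∐ fun n => c n ⊗ npow b n) ⟶ t)) →
      (Σ c : ℕ → C, (s ⟶ ∐ fun n => c n ⊗ npow a n) × ((∐ fun n => c n ⊗ npow b n) ⟶ t)) →
        Prop :=
  fun x y => ∃ f : ∀ n, x.1 n ⟶ y.1 n,
    y.2.1 = x.2.1 ≫ Limits.Sigma.map (fun n => MonoidalCategory.tensorHom (f n) (𝟙 (npow a n))) ∧
      x.2.2 = Limits.Sigma.map (fun n => MonoidalCategory.tensorHom (f n) (𝟙 (npow b n))) ≫ y.2.2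

/-- The existential optic for the action of power series functors
`c ↦ (x ↦ ∐ₙ (cₙ ⊗ xⁿ))`. -/
def TraversalOptic (s t a b : C) : Type u := Quot (TraversalRel s t a b)

/-- The inverse map on representatives: curry the backward part onto the residual. -/
noncomputable def traversalToHom (s t a b : C)
    (x : Σ c : ℕ → C, (s ⟶ ∐ fun n => c n ⊗ npow a n) × ((∐ fun n => c n ⊗ npow b n) ⟶ t)) :
    s ⟶ ∐ fun n => npow a n ⊗ (npow b n ⟹ t) :=
  x.2.1 ≫ Limits.Sigma.map (fun n => (β_ (x.1 n) (npow a n)).hom ≫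
    (npow a n ◁ MonoidalClosed.curry
      ((β_ (npow b n) (x.1 n)).hom ≫ Limits.Sigma.ι (fun m => x.1 m ⊗ npow b m) n ≫ x.2.2)))

theorem traversalToHom_rel (s t a b : C) (x y) (h : TraversalRel s t a b x y) :
    traversalToHom s t a b x = traversalToHom s t a b y := by
  obtain ⟨f, h1, h2⟩ := h
  unfold traversalToHom
  rw [h1, h2, Category.assoc, Sigma.map_comp_map]
  congr 1
  apply Sigma.hom_ext
  intro n
  have hcomp : Limits.Sigma.ι (fun m => x.1 m ⊗ npow b m) n ≫
      (Limits.Sigma.map (fun m => MonoidalCategory.tensorHom (f m) (𝟙 (npow b m))) ≫ y.2.2)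
      = (f n ⊗ₘ 𝟙 (npow b n)) ≫ Limits.Sigma.ι (fun m => y.1 m ⊗ npow b m) n ≫ y.2.2 := by
    simp
  simp only [Sigma.ι_map, Discrete.natTrans_app]
  rw [hcomp]
  have hb : (β_ (npow b n) (x.1 n)).hom ≫ (f n ⊗ₘ 𝟙 (npow b n)) ≫
      Limits.Sigma.ι (fun m => y.1 m ⊗ npow b m) n ≫ y.2.2
      = (npow b n ◁ f n) ≫ (β_ (npow b n) (y.1 n)).hom ≫
        Limits.Sigma.ι (fun m => y.1 m ⊗ npow b m) n ≫ y.2.2 := by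
    rw [tensorHom_id, ← BraidedCategory.braiding_naturality_right_assoc]
  rw [hb, MonoidalClosed.curry_natural_left]
  simp only [tensorHom_id, MonoidalCategory.whiskerLeft_comp]
  rw [← BraidedCategory.braiding_naturality_left_assoc]

/-- Traversals are optics for power series functors: the canonical (natural) map from the
concrete form `C(s, ∐ₙ (aⁿ ⊗ (bⁿ ⟹ t)))` to the coend
`∫^{c ∈ [ℕ,C]} C(s, ∐ₙ (cₙ ⊗ aⁿ)) × C(∐ₙ (cₙ ⊗ bⁿ), t)` is a bijection. -/
theorem traversal_is_optic_for_power_series (s t a b : C) :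
    Function.Bijective
      (fun h : s ⟶ ∐ fun n => npow a n ⊗ (npow b n ⟹ t) =>
        (Quot.mk (TraversalRel s t a b)
          ⟨fun n => npow b n ⟹ t,
            h ≫ Limits.Sigma.map (fun n => (β_ (npow a n) (npow b n ⟹ t)).hom),
            Sigma.desc fun n => (β_ (npow b n ⟹ t) (npow b n)).hom ≫
              (ihom.ev (npow b n)).app t⟩ :
          TraversalOptic s t a b)) := by
  rw [Function.bijective_iff_has_inverse]
  refine ⟨Quot.lift (traversalToHom s t a b) (traversalToHom_rel s t a b), ?_, ?_⟩
  · -- left inverse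
    intro h
    show traversalToHom s t a b _ = h
    unfold traversalToHom
    dsimp only
    rw [Category.assoc, Sigma.map_comp_map]
    have hc : ∀ n, MonoidalClosed.curry ((β_ (npow b n) (npow b n ⟹ t)).hom ≫
        Limits.Sigma.ι (fun m => (npow b m ⟹ t) ⊗ npow b m) n ≫
          (Limits.Sigma.desc fun m => (β_ (npow b m ⟹ t) (npow b m)).hom ≫
            (ihom.ev (npow b m)).app t))
        = 𝟙 (npow b n ⟹ t) := by
      intro n
      rw [colimit.ι_desc]
      dsimp
      rw [SymmetricCategory.symmetry_assoc, ← MonoidalClosed.uncurry_id_eq_ev,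
        MonoidalClosed.curry_uncurry]
    conv_rhs => rw [← Category.comp_id h]
    congr 1
    have hmap : Limits.Sigma.map (fun n => (β_ (npow a n) (npow b n ⟹ t)).hom ≫
        ((β_ (npow b n ⟹ t) (npow a n)).hom ≫
          (npow a n ◁ MonoidalClosed.curry ((β_ (npow b n) (npow b n ⟹ t)).hom ≫
            Limits.Sigma.ι (fun m => (npow b m ⟹ t) ⊗ npow b m) n ≫
              (Limits.Sigma.desc fun m => (β_ (npow b m ⟹ t) (npow b m)).hom ≫
                (ihom.ev (npow b m)).app t)))))
        = 𝟙 (∐ fun n => npow a n ⊗ (npow b n ⟹ t)) := by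
      apply Sigma.hom_ext
      intro n
      simp only [Sigma.ι_map, Discrete.natTrans_app, Category.comp_id]
      rw [hc n]
      simp
    exact hmap
  · -- right inverse
    intro q
    induction q using Quot.ind with
    | _ x =>
      dsimp only
      refine Eq.symm (Quot.sound ?_)
      refine ⟨fun n => MonoidalClosed.curry
        ((β_ (npow b n) (x.1 n)).hom ≫
          Limits.Sigma.ι (fun m => x.1 m ⊗ npow b m) n ≫ x.2.2), ?_, ?_⟩
      · -- forward parts agree
        dsimp only
        unfold traversalToHom
        rw [Category.assoc, Sigma.map_comp_map]
        congr 1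
        apply Sigma.hom_ext
        intro n
        simp only [Sigma.ι_map, Discrete.natTrans_app]
        rw [tensorHom_id]
        simp only [Category.assoc]
        rw [BraidedCategory.braiding_naturality_right_assoc, SymmetricCategory.symmetry_assoc]
      · -- backward parts agree
        dsimp only
        apply Sigma.hom_ext
        intro n
        simp only [Sigma.ι_map_assoc, Discrete.natTrans_app, colimit.ι_desc]
        dsimp only [Cofan.mk_ι_app]
        rw [tensorHom_id, BraidedCategory.braiding_naturality_left_assoc,
          ← MonoidalClosed.uncurry_eq, MonoidalClosed.uncurry_curry,
          SymmetricCategory.symmetry_assoc]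
end

section
/- Grates are optics for the exponential: in a small cartesian closed category C, for all objects s, t, a, b there is an isomorphism of sets ∫^{c ∈ Cᵒᵖ} C(s, c ⟹ a) × C(c ⟹ b, t) ≅ C((s ⟹ a) ⟹ b, t), where the coend is over the opposite category Cᵒᵖ acting by exponentiation. -/
/-!
Grates are optics for the exponential: in a small cartesian closed category `C`, for all
objects `s t a b` the coend `∫^{c ∈ Cᵒᵖ} C(s, c ⟹ a) × C(c ⟹ b, t)` (over the opposite
category acting by exponentiation) is isomorphic to `C((s ⟹ a) ⟹ b, t)`.  We realize the
coend as a quotient, and assert that the canonical comparison map from the concrete form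
is a bijection.
-/

open CategoryTheory CategoryTheory.Limits CategoryTheory.MonoidalCategory
open CategoryTheory.CartesianClosed

universe u

variable {C : Type u} [SmallCategory C] [CartesianMonoidalCategory C] [MonoidalClosed C]

/-- The generating relation of the coend `∫^{c ∈ Cᵒᵖ} C(s, c ⟹ a) × C(c ⟹ b, t)`;
a morphism `c ⟶ c'` of the indexing category `Cᵒᵖ` is a morphism `f : c' ⟶ c` of `C`,
acting on exponentials by precomposition `CartesianClosed.pre`. -/
def GrateRel (s t a b : C) :
    (Σ c : C, (s ⟶ (c ⟹ a)) × ((c ⟹ b) ⟶ t)) →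
      (Σ c : C, (s ⟶ (c ⟹ a)) × ((c ⟹ b) ⟶ t)) → Prop :=
  fun x y => ∃ f : y.1 ⟶ x.1,
    y.2.1 = x.2.1 ≫ (MonoidalClosed.pre f).app a ∧
      x.2.2 = (MonoidalClosed.pre f).app b ≫ y.2.2

/-- The existential optic for the action of the exponential:
the coend `∫^{c ∈ Cᵒᵖ} C(s, c ⟹ a) × C(c ⟹ b, t)`. -/
def GrateOptic (s t a b : C) : Type u := Quot (GrateRel s t a b)

attribute [local instance] BraidedCategory.ofCartesianMonoidalCategory


/-- Flip a morphism `s ⟶ c ⟹ a` to `c ⟶ s ⟹ a` using the braiding. -/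
def hatt {s c a : C} (u : s ⟶ c ⟹ a) : c ⟶ s ⟹ a :=
  MonoidalClosed.curry ((β_ s c).hom ≫ MonoidalClosed.uncurry u)

theorem hatt_hatt {s c a : C} (u : s ⟶ c ⟹ a) : hatt (hatt u) = u := by
  simp [hatt, MonoidalClosed.uncurry_curry, ← Category.assoc]

theorem hatt_comp_pre {s c c' a : C} (u : s ⟶ c ⟹ a) (f : c' ⟶ c) :
    hatt (u ≫ (MonoidalClosed.pre f).app a) = f ≫ hatt u := by
  rw [hatt, hatt, ← MonoidalClosed.curry_natural_left]
  congr 1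
  rw [MonoidalClosed.uncurry_natural_left, MonoidalClosed.uncurry_pre]
  rw [MonoidalClosed.uncurry_eq]
  simp only [Category.assoc, whisker_exchange_assoc,
    ← BraidedCategory.braiding_naturality_right_assoc]

theorem hatt_eta {s a : C} :
    hatt (MonoidalClosed.curry (CartesianMonoidalCategory.lift (CartesianMonoidalCategory.snd (s ⟹ a) s)
      (CartesianMonoidalCategory.fst (s ⟹ a) s) ≫ (ihom.ev s).app a)) = 𝟙 (s ⟹ a) := by
  show hatt (MonoidalClosed.curry ((β_ (s ⟹ a) s).hom ≫ (ihom.ev s).app a)) = 𝟙 (s ⟹ a)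
  rw [hatt, MonoidalClosed.uncurry_curry, ← Category.assoc]
  simp [← MonoidalClosed.uncurry_id_eq_ev]

theorem hatt_injective {s c a : C} : Function.Injective (hatt : (s ⟶ c ⟹ a) → (c ⟶ s ⟹ a)) :=
  Function.LeftInverse.injective hatt_hatt

/-- Grates are optics for the exponential: the canonical (natural) map from the concrete form
`C((s ⟹ a) ⟹ b, t)` to the coend `∫^{c ∈ Cᵒᵖ} C(s, c ⟹ a) × C(c ⟹ b, t)` is a bijection. -/
theorem grate_is_optic_for_exponential (s t a b : C) :
    Function.Bijective (fun g : ((s ⟹ a) ⟹ b) ⟶ t =>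
      (Quot.mk (GrateRel s t a b)
        ⟨s ⟹ a,
          MonoidalClosed.curry (CartesianMonoidalCategory.lift (CartesianMonoidalCategory.snd (s ⟹ a) s)
            (CartesianMonoidalCategory.fst (s ⟹ a) s) ≫ (ihom.ev s).app a),
          g⟩ : GrateOptic s t a b)) := by
  set η : s ⟶ (s ⟹ a) ⟹ a :=
    MonoidalClosed.curry (CartesianMonoidalCategory.lift (CartesianMonoidalCategory.snd (s ⟹ a) s)
      (CartesianMonoidalCategory.fst (s ⟹ a) s) ≫ (ihom.ev s).app a) with hη
  have hwd : ∀ x y, GrateRel s t a b x y →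
      (MonoidalClosed.pre (hatt x.2.1)).app b ≫ x.2.2 = (MonoidalClosed.pre (hatt y.2.1)).app b ≫ y.2.2 := by
    rintro ⟨c, u, v⟩ ⟨c', u', v'⟩ ⟨f, h1, h2⟩
    dsimp at *
    rw [h2, h1, hatt_comp_pre, MonoidalClosed.pre_map]
    simp
  let inv : GrateOptic s t a b → (((s ⟹ a) ⟹ b) ⟶ t) :=
    Quot.lift (fun x => (MonoidalClosed.pre (hatt x.2.1)).app b ≫ x.2.2) hwd
  have hinv : ∀ g, inv (Quot.mk _ ⟨s ⟹ a, η, g⟩) = g := by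
    intro g
    show (MonoidalClosed.pre (hatt η)).app b ≫ g = g
    rw [hη, hatt_eta]
    simp
  constructor
  · intro g₁ g₂ h
    have := congrArg inv h
    rwa [hinv, hinv] at this
  · rintro ⟨⟨c, u, v⟩⟩
    refine ⟨(MonoidalClosed.pre (hatt u)).app b ≫ v, Quot.sound ⟨hatt u, ?_, rfl⟩⟩
    dsimp
    apply hatt_injective
    rw [hatt_comp_pre, hη, hatt_eta, Category.comp_id]
end

section
/- Achromatic lenses are optics for the action c ↦ (c + 1) × (−): in a small bicartesian closed category C (finite products, finite coproducts, internal homs, so products distribute over coproducts), for all objects s, t, a, b there is an isomorphism of sets ∫^{c ∈ C} C(s, (c + 1) × a) × C((c + 1) × b, t) ≅ C(s, (b ⟹ t) + 1) × C(s, a) × C(b, t). -/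
/-!
Achromatic lenses are optics for the action `c ↦ (c + 1) ⨯ (−)`: in a small bicartesian
closed category `C` (with terminal object `𝟙_ C`), for all objects `s t a b` the coend
`∫^{c ∈ C} C(s, (c ⨿ 1) ⊗ a) × C((c ⨿ 1) ⊗ b, t)` is isomorphic to
`C(s, (b ⟹ t) ⨿ 1) × C(s, a) × C(b, t)`.  We assert that the canonical comparison map
from the concrete form is a bijection.
-/

open CategoryTheory CategoryTheory.Limits CategoryTheory.MonoidalCategory
open CategoryTheory.CartesianClosed

universe u

variable {C : Type u} [SmallCategory C] [CartesianMonoidalCategory C] [MonoidalClosed C]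
  [HasFiniteCoproducts C]

attribute [local instance] BraidedCategory.ofCartesianMonoidalCategory

/-- The generating relation of the coend
`∫^{c ∈ C} C(s, (c ⨿ 1) ⊗ a) × C((c ⨿ 1) ⊗ b, t)`. -/
def AchromaticRel (s t a b : C) :
    (Σ c : C, (s ⟶ (c ⨿ 𝟙_ C) ⊗ a) × ((c ⨿ 𝟙_ C) ⊗ b ⟶ t)) →
      (Σ c : C, (s ⟶ (c ⨿ 𝟙_ C) ⊗ a) × ((c ⨿ 𝟙_ C) ⊗ b ⟶ t)) → Prop :=
  fun x y => ∃ f : x.1 ⟶ y.1,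
    y.2.1 = x.2.1 ≫ (coprod.map f (𝟙 (𝟙_ C)) ⊗ₘ 𝟙 a) ∧
      x.2.2 = (coprod.map f (𝟙 (𝟙_ C)) ⊗ₘ 𝟙 b) ≫ y.2.2

/-- The existential optic for the action `c ↦ (c ⨿ 1) ⊗ (−)`. -/
def AchromaticOptic (s t a b : C) : Type u := Quot (AchromaticRel s t a b)

namespace AchromaticAux

open CartesianMonoidalCategory MonoidalClosed

set_option linter.unusedSectionVars false

lemma fst_unit (X : C) : fst X (𝟙_ C) = (ρ_ X).hom := by
  rw [← cancel_epi (ρ_ X).inv]; simp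

/-- The residual morphism of the forward map. -/
noncomputable def R (t b : C) (u : b ⟶ t) : ((b ⟹ t) ⨿ 𝟙_ C) ⊗ b ⟶ t :=
  (coprod.desc (𝟙 (b ⟹ t)) (curry (fst b (𝟙_ C) ≫ u)) ⊗ₘ 𝟙 b) ≫
    (β_ (b ⟹ t) b).hom ≫ (ihom.ev b).app t

noncomputable def resMap {c t b : C} (r : (c ⨿ 𝟙_ C) ⊗ b ⟶ t) : c ⟶ b ⟹ t :=
  curry ((β_ b c).hom ≫ (coprod.inl ▷ b) ≫ r)

noncomputable def uPart {c t b : C} (r : (c ⨿ 𝟙_ C) ⊗ b ⟶ t) : b ⟶ t :=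
  (λ_ b).inv ≫ (coprod.inr ▷ b) ≫ r

lemma jointly_epi {c b X : C} {g h : (c ⨿ 𝟙_ C) ⊗ b ⟶ X}
    (h1 : (coprod.inl ▷ b) ≫ g = (coprod.inl ▷ b) ≫ h)
    (h2 : (coprod.inr ▷ b) ≫ g = (coprod.inr ▷ b) ≫ h) : g = h := by
  rw [← cancel_epi (β_ b (c ⨿ 𝟙_ C)).hom,
    ← cancel_epi (coprodComparison (tensorLeft b) c (𝟙_ C))]
  apply coprod.hom_ext
  · simp only [← Category.assoc]
    rw [coprodComparison_inl]
    simp only [Category.assoc, curriedTensor_obj_map]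
    rw [BraidedCategory.braiding_naturality_right_assoc,
      BraidedCategory.braiding_naturality_right_assoc, h1]
  · simp only [← Category.assoc]
    rw [coprodComparison_inr]
    simp only [Category.assoc, curriedTensor_obj_map]
    rw [BraidedCategory.braiding_naturality_right_assoc,
      BraidedCategory.braiding_naturality_right_assoc, h2]

lemma inl_R {t b : C} (u : b ⟶ t) :
    (coprod.inl ▷ b) ≫ R t b u = (β_ (b ⟹ t) b).hom ≫ (ihom.ev b).app t := by
  rw [R, tensorHom_id, ← comp_whiskerRight_assoc, coprod.inl_desc, id_whiskerRight,
    Category.id_comp]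

lemma inr_R {t b : C} (u : b ⟶ t) :
    (coprod.inr ▷ b) ≫ R t b u = (λ_ b).hom ≫ u := by
  rw [R, tensorHom_id, ← comp_whiskerRight_assoc, coprod.inr_desc,
    BraidedCategory.braiding_naturality_left_assoc, ← uncurry_eq, uncurry_curry,
    ← Category.assoc, fst_unit, braiding_rightUnitor]

lemma uPart_R {t b : C} (u : b ⟶ t) : uPart (R t b u) = u := by
  rw [uPart, inr_R, Iso.inv_hom_id_assoc]

lemma resMap_R {t b : C} (u : b ⟶ t) : resMap (R t b u) = 𝟙 (b ⟹ t) := by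
  rw [resMap, inl_R, ← Category.assoc, SymmetricCategory.symmetry, Category.id_comp,
    ← uncurry_id_eq_ev, curry_uncurry]

lemma resMap_comp {c c' t b : C} (f : c ⟶ c') (r : (c' ⨿ 𝟙_ C) ⊗ b ⟶ t) :
    resMap ((coprod.map f (𝟙 (𝟙_ C)) ⊗ₘ 𝟙 b) ≫ r) = f ≫ resMap r := by
  rw [resMap, resMap, tensorHom_id, ← comp_whiskerRight_assoc, coprod.inl_map,
    comp_whiskerRight_assoc, ← BraidedCategory.braiding_naturality_right_assoc,
    curry_natural_left]

lemma uPart_comp {c c' t b : C} (f : c ⟶ c') (r : (c' ⨿ 𝟙_ C) ⊗ b ⟶ t) :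
    uPart ((coprod.map f (𝟙 (𝟙_ C)) ⊗ₘ 𝟙 b) ≫ r) = uPart r := by
  rw [uPart, uPart, tensorHom_id, ← comp_whiskerRight_assoc, coprod.inr_map,
    comp_whiskerRight_assoc, id_whiskerRight, Category.id_comp]

lemma fact_R {c t b : C} (r : (c ⨿ 𝟙_ C) ⊗ b ⟶ t) :
    (coprod.map (resMap r) (𝟙 (𝟙_ C)) ⊗ₘ 𝟙 b) ≫ R t b (uPart r) = r := by
  apply jointly_epi
  · rw [tensorHom_id, ← comp_whiskerRight_assoc, coprod.inl_map, comp_whiskerRight_assoc,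
      inl_R, BraidedCategory.braiding_naturality_left_assoc, ← uncurry_eq, resMap,
      uncurry_curry, ← Category.assoc, SymmetricCategory.symmetry, Category.id_comp]
  · rw [tensorHom_id, ← comp_whiskerRight_assoc, coprod.inr_map, comp_whiskerRight_assoc,
      id_whiskerRight, Category.id_comp, inr_R, uPart, Iso.hom_inv_id_assoc]

/-- The backward map on representatives. -/
noncomputable def toConcrete (s t a b : C) :
    (Σ c : C, (s ⟶ (c ⨿ 𝟙_ C) ⊗ a) × ((c ⨿ 𝟙_ C) ⊗ b ⟶ t)) →
      (s ⟶ (b ⟹ t) ⨿ 𝟙_ C) × (s ⟶ a) × (b ⟶ t) :=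
  fun x => ⟨x.2.1 ≫ fst _ _ ≫ coprod.map (resMap x.2.2) (𝟙 (𝟙_ C)),
    x.2.1 ≫ snd _ _, uPart x.2.2⟩

lemma toConcrete_rel {s t a b : C}
    {x y : Σ c : C, (s ⟶ (c ⨿ 𝟙_ C) ⊗ a) × ((c ⨿ 𝟙_ C) ⊗ b ⟶ t)}
    (h : AchromaticRel s t a b x y) : toConcrete s t a b x = toConcrete s t a b y := by
  obtain ⟨c, l, r⟩ := x
  obtain ⟨c', l', r'⟩ := y
  obtain ⟨f, hl, hr⟩ := h
  dsimp at hl hr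
  rw [toConcrete, toConcrete]
  dsimp only
  refine Prod.ext ?_ (Prod.ext ?_ ?_)
  · dsimp only
    rw [hl, hr, resMap_comp, coprod.map_comp_id, Category.assoc, tensorHom_fst_assoc]
  · dsimp only
    rw [hl, Category.assoc, tensorHom_snd, Category.comp_id]
  · dsimp only
    rw [hr, uPart_comp]

lemma roundtrip {s t a b : C} (w : s ⟶ (b ⟹ t) ⨿ 𝟙_ C) (v : s ⟶ a) (u : b ⟶ t) :
    toConcrete s t a b ⟨b ⟹ t, lift w v, R t b u⟩ = (w, v, u) := by
  rw [toConcrete]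
  dsimp
  rw [resMap_R, uPart_R, coprod.map_id_id, Category.comp_id, lift_fst, lift_snd]

end AchromaticAux

open CartesianMonoidalCategory MonoidalClosed AchromaticAux

/-- Achromatic lenses are optics for the action `c ↦ (c + 1) ⨯ (−)`: the canonical
(natural) map from the concrete form `C(s, (b ⟹ t) ⨿ 1) × C(s, a) × C(b, t)` to the coend
`∫^{c ∈ C} C(s, (c ⨿ 1) ⊗ a) × C((c ⨿ 1) ⊗ b, t)` is a bijection. -/
theorem achromatic_lens_is_optic (s t a b : C) :
    Function.Bijective
      (fun wvu : (s ⟶ (b ⟹ t) ⨿ 𝟙_ C) × (s ⟶ a) × (b ⟶ t) =>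
        (Quot.mk (AchromaticRel s t a b)
          ⟨b ⟹ t,
            CartesianMonoidalCategory.lift wvu.1 wvu.2.1,
            (coprod.desc (𝟙 (b ⟹ t))
                (MonoidalClosed.curry (CartesianMonoidalCategory.fst b (𝟙_ C) ≫ wvu.2.2)) ⊗ₘ 𝟙 b) ≫
              (β_ (b ⟹ t) b).hom ≫ (ihom.ev b).app t⟩ :
          AchromaticOptic s t a b)) := by
  constructor
  · rintro ⟨w, v, u⟩ ⟨w', v', u'⟩ h
    have h2 : toConcrete s t a b ⟨b ⟹ t, lift w v, R t b u⟩ =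
        toConcrete s t a b ⟨b ⟹ t, lift w' v', R t b u'⟩ :=
      congrArg (Quot.lift (toConcrete s t a b) (fun _ _ => toConcrete_rel)) h
    rw [roundtrip, roundtrip] at h2
    exact h2
  · rintro ⟨⟨c, l, r⟩⟩
    refine ⟨toConcrete s t a b ⟨c, l, r⟩, ?_⟩
    refine (Quot.sound ⟨resMap r, ?_, (fact_R r).symm⟩).symm
    dsimp [toConcrete]
    apply CartesianMonoidalCategory.hom_ext <;> simp
end

section
/- Kaleidoscopes are optics for applicative functors: for all sets s, t, a, b there is an isomorphism ∫^{F ∈ App} Set(s, F a) × Set(F b, t) ≅ Set(Σ_{n∈ℕ} sⁿ × (aⁿ → b), t) ≅ Π_{n∈ℕ} ((aⁿ → b) → (sⁿ → t)), where the coend ranges over the category App of applicative functors. -/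
/-!
Kaleidoscopes are optics for applicative functors: for all sets `s t a b`,
`∫^{F ∈ App} Set(s, F a) × Set(F b, t) ≅ Set(Σₙ sⁿ × (aⁿ → b), t) ≅ Πₙ ((aⁿ → b) → (sⁿ → t))`,
where the coend ranges over the category `App` of applicative functors, i.e. lax monoidal
endofunctors of `(Set, ×)` with monoidal natural transformations between them.
-/

open CategoryTheory

/-- An applicative functor: a lax monoidal endofunctor of `(Set, ×)`. -/
structure AppFunctor where
  /-- the underlying endofunctor of `Set` -/
  F : Type ⥤ Type
  /-- the unit `1 ⟶ F 1` of the lax monoidal structure -/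
  unit : Unit → F.obj Unit
  /-- the multiplication (tensorator) `F X × F Y ⟶ F (X × Y)` -/
  mult : ∀ X Y : Type, F.obj X × F.obj Y → F.obj (X × Y)
  mult_natural : ∀ {X X' Y Y' : Type} (f : X → X') (g : Y → Y') (x : F.obj X) (y : F.obj Y),
    F.map (TypeCat.ofHom (Prod.map f g)) (mult X Y (x, y)) = mult X' Y' (F.map (TypeCat.ofHom f) x, F.map (TypeCat.ofHom g) y)
  mult_assoc : ∀ (X Y Z : Type) (x : F.obj X) (y : F.obj Y) (z : F.obj Z),
    F.map (TypeCat.ofHom (fun p => (p.1.1, (p.1.2, p.2))))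
        (mult (X × Y) Z (mult X Y (x, y), z)) = mult X (Y × Z) (x, mult Y Z (y, z))
  left_unit : ∀ (X : Type) (x : F.obj X),
    F.map (TypeCat.ofHom Prod.snd) (mult Unit X (unit Unit.unit, x)) = x
  right_unit : ∀ (X : Type) (x : F.obj X),
    F.map (TypeCat.ofHom Prod.fst) (mult X Unit (x, unit Unit.unit)) = x

/-- A morphism of applicative functors: a monoidal natural transformation. -/
structure AppHom (P Q : AppFunctor) where
  /-- the underlying natural transformation -/
  η : P.F ⟶ Q.F
  unit_comm : ∀ u : Unit, η.app Unit (P.unit u) = Q.unit u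
  mult_comm : ∀ (X Y : Type) (x : P.F.obj X) (y : P.F.obj Y),
    η.app (X × Y) (P.mult X Y (x, y)) = Q.mult X Y (η.app X x, η.app Y y)

/-- The generating relation of the coend `∫^{F ∈ App} Set(s, F a) × Set(F b, t)`. -/
def KaleidoscopeRel (s t a b : Type) :
    (Σ P : AppFunctor, (s → P.F.obj a) × (P.F.obj b → t)) →
      (Σ P : AppFunctor, (s → P.F.obj a) × (P.F.obj b → t)) → Prop :=
  fun x y => ∃ φ : AppHom x.1 y.1,
    (y.2.1 = fun z => φ.η.app a (x.2.1 z)) ∧ (x.2.2 = fun z => y.2.2 (φ.η.app b z))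

/-- The existential optic for the action of applicative functors:
the coend `∫^{F ∈ App} Set(s, F a) × Set(F b, t)`. -/
def KaleidoscopeOptic (s t a b : Type) : Type 1 := Quot (KaleidoscopeRel s t a b)

/-- the underlying functor of the free applicative / kaleidoscope carrier -/
def GF (s a : Type) : Type ⥤ Type where
  obj X := Σ n : ℕ, (Fin n → s) × ((Fin n → a) → X)
  map g := TypeCat.ofHom fun x => ⟨x.1, x.2.1, fun v => g (x.2.2 v)⟩

lemma GF_ext {s a X : Type} {n m : ℕ} (hnm : n = m) {xs : Fin n → s} {ys : Fin m → s}
    {h : (Fin n → a) → X} {k : (Fin m → a) → X}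
    (h1 : ∀ i : Fin m, xs (Fin.cast hnm.symm i) = ys i)
    (h2 : ∀ v : Fin m → a, h (fun i => v (Fin.cast hnm i)) = k v) :
    (⟨n, xs, h⟩ : (GF s a).obj X) = ⟨m, ys, k⟩ := by
  subst hnm
  obtain rfl : xs = ys := funext h1
  obtain rfl : h = k := funext fun v => h2 v
  rfl

def appG (s a : Type) : AppFunctor where
  F := GF s a
  unit _ := ⟨0, Fin.elim0, fun _ => Unit.unit⟩
  mult X Y p := ⟨p.1.1 + p.2.1, Fin.append p.1.2.1 p.2.2.1,
    fun v => (p.1.2.2 fun i => v (Fin.castAdd _ i), p.2.2.2 fun j => v (Fin.natAdd _ j))⟩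
  mult_natural := by intros; rfl
  mult_assoc := by
    rintro X Y Z ⟨n, xs, h⟩ ⟨m, ys, k⟩ ⟨p, zs, l⟩
    dsimp only [GF]
    refine GF_ext (Nat.add_assoc n m p) (fun i => ?_) (fun v => ?_)
    · rw [Fin.append_assoc]; rfl
    · refine congrArg₂ Prod.mk (congrArg h ?_)
        (congrArg₂ Prod.mk (congrArg k ?_) (congrArg l ?_)) <;>
        · funext i; exact congrArg v (Fin.ext (by simp; try omega))
  left_unit := by
    rintro X ⟨n, xs, h⟩
    dsimp only [GF]
    refine GF_ext (Nat.zero_add n) (fun i => ?_) (fun v => ?_)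
    · rw [Fin.elim0_append]; rfl
    · refine congrArg h ?_
      funext i; exact congrArg v (Fin.ext (by simp))
  right_unit := by
    rintro X ⟨n, xs, h⟩
    dsimp only [GF]
    refine GF_ext (Nat.add_zero n) (fun i => ?_) (fun v => ?_)
    · rw [Fin.append_elim0]; rfl
    · refine congrArg h ?_
      funext i; exact congrArg v (Fin.ext (by simp))

/-- n-fold monoidal power -/
def powA (P : AppFunctor) {a : Type} : ∀ n : ℕ, (Fin n → P.F.obj a) → P.F.obj (Fin n → a)
  | 0, _ => P.F.map (TypeCat.ofHom fun _ => Fin.elim0) (P.unit Unit.unit)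
  | n + 1, f => P.F.map (TypeCat.ofHom fun q => Fin.snoc q.1 q.2)
      (P.mult _ _ (powA P n (fun i => f i.castSucc), f (Fin.last n)))

lemma map_map (P : AppFunctor) {X Y Z : Type} (f : X → Y) (g : Y → Z) (x : P.F.obj X) :
    P.F.map (TypeCat.ofHom g) (P.F.map (TypeCat.ofHom f) x) = P.F.map (TypeCat.ofHom fun u => g (f u)) x := by
  rw [← types_comp_apply (P.F.map _) (P.F.map _), ← P.F.map_comp]; rfl

lemma map_id' (P : AppFunctor) {X : Type} (x : P.F.obj X) : P.F.map (TypeCat.ofHom id) x = x :=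
  P.F.map_id_apply X x

lemma pow_hom {P Q : AppFunctor} (φ : AppHom P Q) {a : Type} (n : ℕ) (f : Fin n → P.F.obj a) :
    φ.η.app _ (powA P n f) = powA Q n (fun i => φ.η.app a (f i)) := by
  induction n with
  | zero =>
      show φ.η.app _ (P.F.map _ _) = _
      rw [FunctorToTypes.naturality, φ.unit_comm]; rfl
  | succ n ih =>
      show φ.η.app _ (P.F.map _ _) = _
      rw [FunctorToTypes.naturality, φ.mult_comm, ih]; rfl

lemma append_castSucc {α : Type} {n m : ℕ} (u : Fin n → α) (v : Fin (m+1) → α) :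
    (fun i : Fin (n+m) => Fin.append u v i.castSucc)
      = Fin.append u (fun i => v i.castSucc) := by
  funext i
  refine Fin.addCases (fun j => ?_) (fun j => ?_) i
  · have : (Fin.castAdd m j).castSucc = Fin.castAdd (m+1) j := Fin.ext rfl
    rw [this, Fin.append_left, Fin.append_left]
  · have : (Fin.natAdd n j).castSucc = Fin.natAdd n j.castSucc := Fin.ext rfl
    rw [this, Fin.append_right, Fin.append_right]

lemma append_last {α : Type} {n m : ℕ} (u : Fin n → α) (v : Fin (m+1) → α) :
    Fin.append u v (Fin.last (n+m)) = v (Fin.last m) := by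
  have : Fin.last (n+m) = Fin.natAdd n (Fin.last m) := Fin.ext rfl
  rw [this, Fin.append_right]

lemma powA_zero (P : AppFunctor) {a : Type} (f : Fin 0 → P.F.obj a) :
    powA P 0 f = P.F.map (TypeCat.ofHom fun _ => (Fin.elim0 : Fin 0 → a)) (P.unit Unit.unit) := rfl

lemma powA_succ (P : AppFunctor) {a : Type} (n : ℕ) (f : Fin (n+1) → P.F.obj a) :
    powA P (n+1) f = P.F.map (TypeCat.ofHom fun q : (Fin n → a) × a => Fin.snoc q.1 q.2)
      (P.mult (Fin n → a) a (powA P n (fun i => f i.castSucc), f (Fin.last n))) := rfl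

lemma powA_add (P : AppFunctor) {a : Type} (n : ℕ) (u : Fin n → P.F.obj a) :
    ∀ (m : ℕ) (v : Fin m → P.F.obj a),
    powA P (n + m) (Fin.append u v) =
      P.F.map (TypeCat.ofHom fun q => Fin.append q.1 q.2) (P.mult _ _ (powA P n u, powA P m v)) := by
  intro m
  induction m with
  | zero =>
      intro v
      have h1 : Fin.append u v = u := funext fun i => Fin.append_left u v i
      rw [h1, powA_zero P v]
      rw [← map_id' P (powA P n u), ← P.mult_natural, map_map]
      have h2 : (fun (q : (Fin n → a) × Unit) =>
          Fin.append ((Prod.map id (fun _ => (Fin.elim0 : Fin 0 → a)) q).1)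
            ((Prod.map id (fun _ => (Fin.elim0 : Fin 0 → a)) q).2))
          = (fun q : (Fin n → a) × Unit => q.1) := by
        funext q; exact funext fun i => Fin.append_left _ _ i
      rw [h2]
      exact (P.right_unit _ _).symm
  | succ m ih =>
      intro v
      have e0 : powA P (n+(m+1)) (Fin.append u v)
          = P.F.map (TypeCat.ofHom fun q : (Fin (n+m) → a) × a => Fin.snoc q.1 q.2)
            (P.mult (Fin (n+m) → a) a (powA P (n+m) (fun i => Fin.append u v i.castSucc),
              Fin.append u v (Fin.last (n+m)))) := rfl
      rw [e0, append_castSucc, append_last, ih, powA_succ P m v]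
      rw [show P.mult _ _ (P.F.map (TypeCat.ofHom fun q : (Fin n → a) × (Fin m → a) => Fin.append q.1 q.2)
            (P.mult _ _ (powA P n u, powA P m (fun i => v i.castSucc))), v (Fin.last m))
          = P.F.map (TypeCat.ofHom (Prod.map (fun q : (Fin n → a) × (Fin m → a) => Fin.append q.1 q.2) id))
            (P.mult _ _ (P.mult _ _ (powA P n u, powA P m (fun i => v i.castSucc)),
              v (Fin.last m))) by
        rw [P.mult_natural, map_id' P (v (Fin.last m))]]
      rw [show P.mult (Fin n → a) (Fin (m+1) → a) (powA P n u,
            P.F.map (TypeCat.ofHom fun q : (Fin m → a) × a => Fin.snoc q.1 q.2)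
              (P.mult (Fin m → a) a (powA P m (fun i => v i.castSucc), v (Fin.last m))))
          = P.F.map (TypeCat.ofHom (Prod.map id (fun q : (Fin m → a) × a => Fin.snoc q.1 q.2)))
            (P.mult (Fin n → a) ((Fin m → a) × a) (powA P n u,
              P.mult (Fin m → a) a (powA P m (fun i => v i.castSucc), v (Fin.last m)))) by
        rw [P.mult_natural, map_id' P (powA P n u)]]
      rw [map_map, map_map, ← P.mult_assoc, map_map]
      refine congrArg (fun φ => P.F.map (TypeCat.ofHom φ) _) ?_
      funext q
      exact (Fin.append_snoc _ _ _).symm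

/-- the tautological coalgebra `s → G a` -/
def ιG (s a : Type) (z : s) : (GF s a).obj a := ⟨1, fun _ => z, fun v => v 0⟩

lemma powG (s a : Type) (n : ℕ) (xs : Fin n → s) :
    powA (appG s a) n (fun i => ιG s a (xs i)) = ⟨n, xs, id⟩ := by
  induction n with
  | zero =>
      show (⟨0, Fin.elim0, fun _ => (Fin.elim0 : Fin 0 → a)⟩ : (GF s a).obj (Fin 0 → a))
        = ⟨0, xs, id⟩
      refine GF_ext rfl (fun i => i.elim0) (fun v => ?_)
      exact funext fun i => i.elim0
  | succ n ih =>
      refine (powA_succ (appG s a) n _).trans ?_; rw [ih (fun i => xs i.castSucc)]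
      dsimp only [appG, GF, ιG, TypeCat.ofHom_apply]
      refine GF_ext rfl (fun i => ?_) (fun v => ?_)
      · refine Fin.addCases (fun j => ?_) (fun j => ?_) i
        · exact Fin.append_left (fun i : Fin n => xs i.castSucc)
            (fun _ : Fin 1 => xs (Fin.last n)) j
        · refine (Fin.append_right (fun i : Fin n => xs i.castSucc)
            (fun _ : Fin 1 => xs (Fin.last n)) j).trans ?_
          exact congrArg xs (Fin.ext (by simp only [Fin.val_last, Fin.coe_natAdd]; omega))
      · funext i
        refine Fin.lastCases ?_ (fun j => ?_) i
        · refine (Fin.snoc_last _ _).trans ?_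
          exact congrArg v (Fin.ext (by simp))
        · exact Fin.snoc_castSucc _ _ _

lemma mult_map_left (P : AppFunctor) {X X' Y : Type} (e : X → X') (x : P.F.obj X)
    (y : P.F.obj Y) :
    P.mult X' Y (P.F.map (TypeCat.ofHom e) x, y) = P.F.map (TypeCat.ofHom (Prod.map e id)) (P.mult X Y (x, y)) := by
  rw [P.mult_natural, map_id']

/-- the canonical comparison homomorphism from the free applicative -/
def toHom {s a : Type} (P : AppFunctor) (f : s → P.F.obj a) : AppHom (appG s a) P where
  η := { app := fun X => TypeCat.ofHom fun k => P.F.map (TypeCat.ofHom k.2.2) (powA P k.1 (fun i => f (k.2.1 i)))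
         naturality := by
           intro X Y g
           ext k
           show P.F.map (TypeCat.ofHom fun v => g (k.2.2 v)) (powA P k.1 fun i => f (k.2.1 i))
             = P.F.map g (P.F.map (TypeCat.ofHom k.2.2) (powA P k.1 fun i => f (k.2.1 i)))
           exact (map_map P _ _ _).symm }
  unit_comm := by
    intro u
    show P.F.map (TypeCat.ofHom fun _ => Unit.unit) (powA P 0 (fun i => f (Fin.elim0 i))) = P.unit u
    rw [powA_zero]
    simp only [map_map]
    have : (fun (_ : Unit) => Unit.unit) = (id : Unit → Unit) := funext fun _ => rfl
    rw [this, map_id']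
  mult_comm := by
    intro X Y x y
    obtain ⟨n, xs, h⟩ := x; obtain ⟨m, ys, k⟩ := y
    show P.F.map (TypeCat.ofHom fun v => (h fun i => v (Fin.castAdd m i), k fun j => v (Fin.natAdd n j)))
        (powA P (n + m) (fun i => f (Fin.append xs ys i)))
      = P.mult X Y (P.F.map (TypeCat.ofHom h) (powA P n (fun i => f (xs i))),
          P.F.map (TypeCat.ofHom k) (powA P m (fun j => f (ys j))))
    have e : (fun i => f (Fin.append xs ys i))
        = Fin.append (fun i => f (xs i)) (fun j => f (ys j)) := by
      funext i; refine Fin.addCases (fun j => ?_) (fun j => ?_) i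
      · exact (congrArg f (Fin.append_left xs ys j)).trans
          (Fin.append_left (fun i => f (xs i)) (fun j => f (ys j)) j).symm
      · exact (congrArg f (Fin.append_right xs ys j)).trans
          (Fin.append_right (fun i => f (xs i)) (fun j => f (ys j)) j).symm
    rw [e, powA_add, ← P.mult_natural]
    simp only [map_map]
    refine congrArg (fun φ => P.F.map (TypeCat.ofHom φ) _) ?_
    funext q
    show (h fun i => Fin.append q.1 q.2 (Fin.castAdd m i),
        k fun j => Fin.append q.1 q.2 (Fin.natAdd n j)) = Prod.map h k q
    exact congrArg₂ Prod.mk (congrArg h (funext fun i => Fin.append_left _ _ i))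
      (congrArg k (funext fun j => Fin.append_right _ _ j))

lemma toHom_ι {s a : Type} (P : AppFunctor) (f : s → P.F.obj a) (z : s) :
    (toHom P f).η.app a (ιG s a z) = f z := by
  have h0 : (fun q : Unit × a =>
      @Fin.snoc 0 (fun _ => a) Fin.elim0 q.2 (0 : Fin 1)) = Prod.snd :=
    funext fun q => Fin.snoc_last _ _
  show P.F.map (TypeCat.ofHom fun v : Fin 1 → a => v 0) (powA P 1 (fun _ => f z)) = f z
  rw [powA_succ, powA_zero, mult_map_left]
  simp only [map_map]
  exact (congrArg (fun φ => P.F.map (TypeCat.ofHom φ) _) h0).trans (P.left_unit a (f z))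

/-- the forward map of the coend comparison -/
def fwdFun {s t a b : Type} (x : Σ P : AppFunctor, (s → P.F.obj a) × (P.F.obj b → t)) :
    (Σ n : ℕ, (Fin n → s) × ((Fin n → a) → b)) → t :=
  fun k => x.2.2 ((toHom x.1 x.2.1).η.app b k)

lemma fwd_wd {s t a b : Type} (x y : Σ P : AppFunctor, (s → P.F.obj a) × (P.F.obj b → t))
    (hxy : KaleidoscopeRel s t a b x y) : fwdFun x = fwdFun y := by
  obtain ⟨φ, hf, hg⟩ := hxy
  funext k
  show x.2.2 (x.1.F.map (TypeCat.ofHom k.2.2) (powA x.1 k.1 (fun i => x.2.1 (k.2.1 i))))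
    = y.2.2 (y.1.F.map (TypeCat.ofHom k.2.2) (powA y.1 k.1 (fun i => y.2.1 (k.2.1 i))))
  rw [hg]
  show y.2.2 (φ.η.app b (x.1.F.map (TypeCat.ofHom k.2.2) (powA x.1 k.1 fun i => x.2.1 (k.2.1 i))))
    = y.2.2 (y.1.F.map (TypeCat.ofHom k.2.2) (powA y.1 k.1 fun i => y.2.1 (k.2.1 i)))
  refine congrArg y.2.2 ((FunctorToTypes.naturality φ.η _ _).trans ?_); rw [pow_hom]
  have : (fun i => φ.η.app a (x.2.1 (k.2.1 i))) = fun i => y.2.1 (k.2.1 i) :=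
    funext fun i => (congrFun hf (k.2.1 i)).symm
  rw [this]

/-- Kaleidoscopes are optics for applicative functors:
`∫^{F ∈ App} Set(s, F a) × Set(F b, t) ≅ Set(Σₙ sⁿ × (aⁿ → b), t)
  ≅ Πₙ ((aⁿ → b) → (sⁿ → t))`. -/
theorem kaleidoscope_is_optic_for_applicatives (s t a b : Type) :
    Nonempty (KaleidoscopeOptic s t a b ≃
        ((Σ n : ℕ, (Fin n → s) × ((Fin n → a) → b)) → t)) ∧
    Nonempty (((Σ n : ℕ, (Fin n → s) × ((Fin n → a) → b)) → t) ≃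
        (∀ n : ℕ, ((Fin n → a) → b) → (Fin n → s) → t)) := by
  constructor
  · refine ⟨{
      toFun := Quot.lift fwdFun fwd_wd
      invFun := fun q => Quot.mk _ ⟨appG s a, ιG s a, q⟩
      left_inv := ?_
      right_inv := ?_ }⟩
    · intro x
      induction x using Quot.ind with
      | _ p =>
      exact Quot.sound ⟨toHom p.1 p.2.1,
        funext fun z => (toHom_ι p.1 p.2.1 z).symm, rfl⟩
    · intro q
      funext k
      show q ((GF s a).map (TypeCat.ofHom k.2.2) (powA (appG s a) k.1 (fun i => ιG s a (k.2.1 i)))) = q k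
      rw [powG]
      rfl
  · exact ⟨{
      toFun := fun q n h xs => q ⟨n, xs, h⟩
      invFun := fun p k => p k.1 k.2.2 k.2.1
      left_inv := fun q => funext fun k => rfl
      right_inv := fun p => rfl }⟩
end

section
/- Algebraic lenses: let ψ be a monad on a small category C with finite products, and let ψ-Alg be its Eilenberg–Moore category with forgetful functor U : ψ-Alg ⥤ C. For all objects s, t, a, b of C there is an isomorphism of sets ∫^{c ∈ ψ-Alg} C(s, U c × a) × C(U c × b, t) ≅ C(s, a) × C(ψ s × b, t). -/
/-!
Algebraic lenses: for a monad `ψ` on a small category `C` with finite products, and the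
action of the Eilenberg–Moore category `ψ-Alg` on `C` given by `c ↦ U c ⨯ (−)` (where
`U : ψ-Alg ⥤ C` is the forgetful functor), for all objects `s t a b` the coend
`∫^{c ∈ ψ-Alg} C(s, U c ⨯ a) × C(U c ⨯ b, t)` is isomorphic to
`C(s, a) × C(ψ s ⨯ b, t)`.  We assert that the canonical comparison map from the
concrete form (using the free algebra `ψ s`) is a bijection.
-/

open CategoryTheory CategoryTheory.Limits

universe u

variable {C : Type u} [SmallCategory C] [HasFiniteProducts C] (ψ : Monad C)

/-- The generating relation of the coend `∫^{c ∈ ψ-Alg} C(s, U c ⨯ a) × C(U c ⨯ b, t)`,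
where `U = (Monad.forget ψ)` is the forgetful functor from the Eilenberg–Moore category. -/
def AlgLensRel (s t a b : C) :
    (Σ c : ψ.Algebra, (s ⟶ (Monad.forget ψ).obj c ⨯ a) × ((Monad.forget ψ).obj c ⨯ b ⟶ t)) →
      (Σ c : ψ.Algebra, (s ⟶ (Monad.forget ψ).obj c ⨯ a) × ((Monad.forget ψ).obj c ⨯ b ⟶ t)) →
        Prop :=
  fun x y => ∃ f : x.1 ⟶ y.1,
    y.2.1 = x.2.1 ≫ prod.map ((Monad.forget ψ).map f) (𝟙 a) ∧
      x.2.2 = prod.map ((Monad.forget ψ).map f) (𝟙 b) ≫ y.2.2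

/-- The existential optic for the action of `ψ`-algebras by `c ↦ U c ⨯ (−)`. -/
def AlgLensOptic (s t a b : C) : Type u := Quot (AlgLensRel ψ s t a b)

/-- The inverse map on representatives: extract the concrete lens data. -/
noncomputable def algLensBeta (s t a b : C) :
    (Σ c : ψ.Algebra, (s ⟶ (Monad.forget ψ).obj c ⨯ a) × ((Monad.forget ψ).obj c ⨯ b ⟶ t)) →
      (s ⟶ a) × ((ψ : C ⥤ C).obj s ⨯ b ⟶ t) :=
  fun x => ⟨x.2.1 ≫ prod.snd,
    prod.map ((ψ : C ⥤ C).map (x.2.1 ≫ prod.fst) ≫ x.1.a) (𝟙 b) ≫ x.2.2⟩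

theorem algLensBeta_rel (s t a b : C) {x y}
    (h : AlgLensRel ψ s t a b x y) : algLensBeta ψ s t a b x = algLensBeta ψ s t a b y := by
  obtain ⟨f, h1, h2⟩ := h
  unfold algLensBeta
  ext
  · erw [h1, Category.assoc, prod.map_snd, Category.comp_id]
  · simp only [h1, h2]
    erw [← Category.assoc, prod.map_map]
    congr 2
    simp only [Category.assoc, Category.comp_id, Functor.map_comp]
    simp only [← Functor.map_comp_assoc, prod.map_fst]
    simp only [Functor.map_comp_assoc, Category.assoc, Category.comp_id]
    have hf := f.h
    simp only [Monad.forget] at *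
    simp [reassoc_of% hf]
    erw [← Functor.map_comp_assoc ψ.toFunctor (prod.map f.f (𝟙 a)) prod.fst, prod.map_fst,
      Functor.map_comp_assoc, hf]
    simp

/-- Algebraic lenses: the canonical (natural) map from the concrete form
`C(s, a) × C(ψ s ⨯ b, t)` to the coend `∫^{c ∈ ψ-Alg} C(s, U c ⨯ a) × C(U c ⨯ b, t)`
(using the free algebra on `s`) is a bijection. -/
theorem algebraic_lens_is_optic (s t a b : C) :
    Function.Bijective
      (fun vu : (s ⟶ a) × ((ψ : C ⥤ C).obj s ⨯ b ⟶ t) =>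
        (Quot.mk (AlgLensRel ψ s t a b)
          ⟨(Monad.free ψ).obj s, prod.lift (ψ.η.app s) vu.1, vu.2⟩ :
          AlgLensOptic ψ s t a b)) := by
  constructor
  · intro vu vu' h
    have := congrArg (Quot.lift (algLensBeta ψ s t a b) (fun x y => algLensBeta_rel ψ s t a b)) h
    simp [algLensBeta, Monad.free] at this
    obtain ⟨h1, h2⟩ := this
    erw [prod.lift_snd, prod.lift_snd] at h1
    erw [← Functor.map_comp, ← Functor.map_comp, prod.lift_fst, prod.lift_fst, Monad.right_unit,
      prod.map_id_id, Category.id_comp, Category.id_comp] at h2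
    exact Prod.ext h1 h2
  · rintro ⟨⟨c, f, g⟩⟩
    refine ⟨⟨f ≫ prod.snd, prod.map ((ψ : C ⥤ C).map (f ≫ prod.fst) ≫ c.a) (𝟙 b) ≫ g⟩, ?_⟩
    apply Quot.sound
    refine ⟨⟨(ψ : C ⥤ C).map (f ≫ prod.fst) ≫ c.a, ?_⟩, ?_, rfl⟩
    · show (ψ : C ⥤ C).map _ ≫ c.a = ψ.μ.app s ≫ _
      erw [Functor.map_comp, Category.assoc, ← c.assoc]
      have := ψ.μ.naturality_assoc (f ≫ (prod.fst : (Monad.forget ψ).obj c ⨯ a ⟶ _)) c.a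
      simp only [Functor.comp_map, Functor.map_comp, Category.assoc] at this ⊢
      exact (Category.assoc _ _ _).trans this
    · ext
      · simp only [Monad.forget, Monad.free, prod.comp_lift, Category.assoc, prod.lift_map,
          prod.lift_fst, Category.comp_id]
        erw [prod.map_fst, prod.lift_fst_assoc, ← ψ.η.naturality_assoc, c.unit]
        simp [c.unit]
      · dsimp only
        erw [Category.assoc, prod.map_snd, Category.comp_id, prod.lift_snd]
end

section
/- Setters are optics for the action of arbitrary endofunctors: for all sets s, t, a, b there is an isomorphism ∫^{F ∈ [Set, Set]} Set(s, F a) × Set(F b, t) ≅ Set(s × (a → b), t), where the coend ranges over the category of all endofunctors of Set. -/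
/-!
Setters are optics for the action of arbitrary endofunctors of `Set`: for all sets
`s t a b` the coend `∫^{F ∈ [Set, Set]} Set(s, F a) × Set(F b, t)` is isomorphic to
`Set(s × (a → b), t)`.  We assert that the canonical comparison map from the concrete
form (using the endofunctor `c ↦ s × (a → c)`) is a bijection.
-/

open CategoryTheory

universe u

/-- The tabulation endofunctor `c ↦ s × (a → c)` of `Set`. -/
def tabulateFunctor (s a : Type u) : Type u ⥤ Type u where
  obj c := s × (a → c)
  map f := TypeCat.ofHom (fun x : s × (a → _) => (x.1, f ∘ x.2))

/-- The generating relation of the coend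
`∫^{F ∈ [Set,Set]} Set(s, F a) × Set(F b, t)` over the category of all endofunctors
of `Set` with natural transformations between them. -/
def SetterRel (s t a b : Type u) :
    (Σ F : Type u ⥤ Type u, (s → F.obj a) × (F.obj b → t)) →
      (Σ F : Type u ⥤ Type u, (s → F.obj a) × (F.obj b → t)) → Prop :=
  fun x y => ∃ η : x.1 ⟶ y.1,
    (y.2.1 = fun z => η.app a (x.2.1 z)) ∧ (x.2.2 = fun z => y.2.2 (η.app b z))

/-- The existential optic for the action of arbitrary endofunctors of `Set`. -/
def SetterOptic (s t a b : Type u) : Type (u + 1) := Quot (SetterRel s t a b)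

/-- Decoding a coend element into a concrete setter. -/
def setterDecode (s t a b : Type u) : SetterOptic s t a b → (s × (a → b) → t) :=
  Quot.lift (fun x zf => x.2.2 (x.1.map (TypeCat.ofHom zf.2) (x.2.1 zf.1))) (by
    rintro ⟨F, l, r⟩ ⟨G, l', r'⟩ ⟨η, h1, h2⟩
    funext zf
    simp only at h1 h2 ⊢
    rw [h2, h1]
    have := (NatTrans.naturality_apply η (TypeCat.ofHom zf.2) (l zf.1))
    exact congrArg r' this)

/-- Setters are optics for the action of arbitrary endofunctors: the canonical (natural)
map from the concrete form `Set(s × (a → b), t)` to the coend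
`∫^{F ∈ [Set,Set]} Set(s, F a) × Set(F b, t)` is a bijection. -/


theorem setter_is_optic (s t a b : Type u) :
    Function.Bijective (fun g : s × (a → b) → t =>
      (Quot.mk (SetterRel s t a b)
        ⟨tabulateFunctor s a, fun z => (z, id), g⟩ : SetterOptic s t a b)) := by
  constructor
  · intro g g' h
    have h2 := congrArg (setterDecode s t a b) h
    exact h2
  · intro q
    induction q using Quot.ind with
    | _ x =>
      obtain ⟨F, l, r⟩ := x
      refine ⟨fun zf => r (F.map (TypeCat.ofHom zf.2) (l zf.1)), ?_⟩
      apply Quot.sound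
      refine ⟨{ app := fun c => TypeCat.ofHom (fun x : s × (a → c) => F.map (TypeCat.ofHom x.2) (l x.1)), naturality := ?_ }, ?_, ?_⟩
      · intro c d f
        ext x
        show F.map (TypeCat.ofHom x.2 ≫ f) (l x.1) = F.map f (F.map (TypeCat.ofHom x.2) (l x.1))
        rw [F.map_comp]
        rfl
      · funext z
        exact (F.map_id_apply a (l z)).symm
      · rfl
end

section
/- Affine traversals are optics for the action (c,d) ↦ c + d × (−): in a small bicartesian closed category C, for all objects s, t, a, b there is an isomorphism of sets ∫^{(c,d) ∈ C × C} C(s, c + d × a) × C(c + d × b, t) ≅ C(s, t + a × (b ⟹ t)). -/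
/-!
Affine traversals are optics for the action `(c,d) ↦ c + d ⨯ (−)`: in a small bicartesian
closed category `C`, for all objects `s t a b` the coend
`∫^{(c,d) ∈ C × C} C(s, c ⨿ (d ⊗ a)) × C(c ⨿ (d ⊗ b), t)` is isomorphic to
`C(s, t ⨿ (a ⊗ (b ⟹ t)))`. We assert that the canonical comparison map from the
concrete form is a bijection.
-/

open CategoryTheory CategoryTheory.Limits CategoryTheory.MonoidalCategory
open CategoryTheory.CartesianClosed

universe u

variable {C : Type u} [SmallCategory C] [CartesianMonoidalCategory C] [MonoidalClosed C]
  [HasFiniteCoproducts C]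

attribute [local instance] BraidedCategory.ofCartesianMonoidalCategory

/-- The generating relation of the coend
`∫^{(c,d) ∈ C × C} C(s, c ⨿ (d ⊗ a)) × C(c ⨿ (d ⊗ b), t)`. -/
def AffineRel (s t a b : C) :
    (Σ cd : C × C, (s ⟶ cd.1 ⨿ (cd.2 ⊗ a)) × (cd.1 ⨿ (cd.2 ⊗ b) ⟶ t)) →
      (Σ cd : C × C, (s ⟶ cd.1 ⨿ (cd.2 ⊗ a)) × (cd.1 ⨿ (cd.2 ⊗ b) ⟶ t)) → Prop :=
  fun x y => ∃ (f : x.1.1 ⟶ y.1.1) (g : x.1.2 ⟶ y.1.2),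
    y.2.1 = x.2.1 ≫ coprod.map f (g ⊗ₘ 𝟙 a) ∧
      x.2.2 = coprod.map f (g ⊗ₘ 𝟙 b) ≫ y.2.2

/-- The existential optic for the action `(c,d) ↦ c ⨿ (d ⊗ −)`. -/
def AffineOptic (s t a b : C) : Type u := Quot (AffineRel s t a b)

/-- Decoding an existential optic representative as a concrete affine traversal. -/
noncomputable def affDecode {s t a b : C}
    (x : Σ cd : C × C, (s ⟶ cd.1 ⨿ (cd.2 ⊗ a)) × (cd.1 ⨿ (cd.2 ⊗ b) ⟶ t)) :
    s ⟶ t ⨿ (a ⊗ (b ⟹ t)) :=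
  x.2.1 ≫ coprod.map (coprod.inl ≫ x.2.2)
    ((β_ x.1.2 a).hom ≫
      (a ◁ MonoidalClosed.curry ((β_ b x.1.2).hom ≫ coprod.inr ≫ x.2.2)))

lemma affDecode_rel {s t a b : C}
    (x y : Σ cd : C × C, (s ⟶ cd.1 ⨿ (cd.2 ⊗ a)) × (cd.1 ⨿ (cd.2 ⊗ b) ⟶ t))
    (h : AffineRel s t a b x y) : affDecode x = affDecode y := by
  obtain ⟨f, g, hu, hv⟩ := h
  obtain ⟨⟨c, d⟩, u, v⟩ := x
  obtain ⟨⟨c', d'⟩, u', v'⟩ := y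
  dsimp at f g hu hv ⊢
  unfold affDecode
  dsimp
  rw [hu, hv]
  have h1 : (β_ b d).hom ≫ coprod.inr ≫ coprod.map f (g ⊗ₘ 𝟙 b) ≫ v' =
      b ◁ g ≫ (β_ b d').hom ≫ coprod.inr ≫ v' := by
    rw [coprod.inr_map_assoc]
    rw [tensorHom_id, ← BraidedCategory.braiding_naturality_right_assoc]
  rw [h1, MonoidalClosed.curry_natural_left]
  have h2 : (β_ d a).hom ≫
        (a ◁ (g ≫ MonoidalClosed.curry ((β_ b d').hom ≫ coprod.inr ≫ v'))) =
      (g ⊗ₘ 𝟙 a) ≫ (β_ d' a).hom ≫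
        (a ◁ MonoidalClosed.curry ((β_ b d').hom ≫ coprod.inr ≫ v')) := by
    rw [MonoidalCategory.whiskerLeft_comp, tensorHom_id,
      ← BraidedCategory.braiding_naturality_left_assoc]
  rw [h2]
  simp [coprod.map_map]

lemma affDecode_encode {s t a b : C} (h : s ⟶ t ⨿ (a ⊗ (b ⟹ t))) :
    affDecode (s := s) (t := t) (a := a) (b := b)
      ⟨(t, b ⟹ t),
        h ≫ coprod.map (𝟙 t) (β_ a (b ⟹ t)).hom,
        coprod.desc (𝟙 t) ((β_ (b ⟹ t) b).hom ≫ (ihom.ev b).app t)⟩ = h := by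
  unfold affDecode
  dsimp
  have hcur : MonoidalClosed.curry ((β_ b (b ⟹ t)).hom ≫ coprod.inr ≫
      coprod.desc (𝟙 t) ((β_ (b ⟹ t) b).hom ≫ (ihom.ev b).app t)) = 𝟙 (b ⟹ t) := by
    rw [coprod.inr_desc, SymmetricCategory.symmetry_assoc,
      ← MonoidalClosed.uncurry_id_eq_ev, MonoidalClosed.curry_uncurry]
  rw [hcur]
  simp [coprod.map_map]
  rw [coprod.inl_desc]
  exact (congrArg (h ≫ ·) coprod.map_id_id).trans (Category.comp_id h)

/-- Affine traversals are optics for the action `(c,d) ↦ c + d ⨯ (−)`: the canonical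
(natural) map from the concrete form `C(s, t ⨿ (a ⊗ (b ⟹ t)))` to the coend
`∫^{(c,d) ∈ C × C} C(s, c ⨿ (d ⊗ a)) × C(c ⨿ (d ⊗ b), t)` is a bijection. -/
theorem affine_traversal_is_optic (s t a b : C) :
    Function.Bijective (fun h : s ⟶ t ⨿ (a ⊗ (b ⟹ t)) =>
      (Quot.mk (AffineRel s t a b)
        ⟨(t, b ⟹ t),
          h ≫ coprod.map (𝟙 t) (β_ a (b ⟹ t)).hom,
          coprod.desc (𝟙 t) ((β_ (b ⟹ t) b).hom ≫ (ihom.ev b).app t)⟩ :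
        AffineOptic s t a b)) := by
  constructor
  · intro h₁ h₂ he
    have h3 : affDecode (⟨(t, b ⟹ t),
          h₁ ≫ coprod.map (𝟙 t) (β_ a (b ⟹ t)).hom,
          coprod.desc (𝟙 t) ((β_ (b ⟹ t) b).hom ≫ (ihom.ev b).app t)⟩ :
          Σ cd : C × C, (s ⟶ cd.1 ⨿ (cd.2 ⊗ a)) × (cd.1 ⨿ (cd.2 ⊗ b) ⟶ t)) =
        affDecode ⟨(t, b ⟹ t),
          h₂ ≫ coprod.map (𝟙 t) (β_ a (b ⟹ t)).hom,
          coprod.desc (𝟙 t) ((β_ (b ⟹ t) b).hom ≫ (ihom.ev b).app t)⟩ :=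
      congrArg (Quot.lift affDecode affDecode_rel) he
    exact (affDecode_encode h₁).symm.trans (h3.trans (affDecode_encode h₂))
  · intro q
    induction q using Quot.ind with
    | _ x =>
      refine ⟨affDecode x, ?_⟩
      dsimp only
      refine (Quot.sound ?_).symm
      obtain ⟨⟨c, d⟩, u, v⟩ := x
      refine ⟨coprod.inl ≫ v,
        MonoidalClosed.curry ((β_ b d).hom ≫ coprod.inr ≫ v), ?_, ?_⟩
      · dsimp
        unfold affDecode
        dsimp
        simp only [Category.assoc, coprod.map_map, Category.comp_id,
          BraidedCategory.braiding_naturality_right,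
          SymmetricCategory.symmetry_assoc, tensorHom_id]
      · dsimp
        unfold affDecode
        apply coprod.hom_ext
        · simp
          rw [coprod.inl_desc]
        · rw [coprod.inr_map_assoc, coprod.inr_desc, tensorHom_id,
            BraidedCategory.braiding_naturality_left_assoc,
            ← MonoidalClosed.uncurry_eq, MonoidalClosed.uncurry_curry,
            SymmetricCategory.symmetry_assoc]
end

section
/- Glasses are optics for the action (c,d) ↦ c × (d ⟹ (−)): in a small cartesian closed category C, for all objects s, t, a, b there is an isomorphism of sets ∫^{(c,d) ∈ C × C} C(s, c × (d ⟹ a)) × C((d ⟹ b) × c, t) ≅ C(((s ⟹ a) ⟹ b) × s, t). -/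
/-!
Glasses are optics for the action `(c,d) ↦ c ⨯ (d ⟹ (−))`: in a small cartesian closed
category `C`, for all objects `s t a b` the coend
`∫^{(c,d)} C(s, c ⨯ (d ⟹ a)) × C((d ⟹ b) ⨯ c, t)` is isomorphic to
`C(((s ⟹ a) ⟹ b) ⨯ s, t)`.  The indexing variable `c` acts covariantly and `d`
contravariantly (via `pre`).  We assert that the canonical comparison map from the
concrete form is a bijection.
-/

open CategoryTheory CategoryTheory.Limits CategoryTheory.MonoidalCategory
open CategoryTheory.MonoidalClosed CategoryTheory.CartesianClosed

universe u

variable {C : Type u} [SmallCategory C] [CartesianMonoidalCategory C] [MonoidalClosed C]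

attribute [local instance] BraidedCategory.ofCartesianMonoidalCategory

/-- The generating relation of the coend
`∫^{(c,d)} C(s, c ⊗ (d ⟹ a)) × C((d ⟹ b) ⊗ c, t)`. -/
def GlassRel (s t a b : C) :
    (Σ cd : C × C, (s ⟶ cd.1 ⊗ (cd.2 ⟹ a)) × ((cd.2 ⟹ b) ⊗ cd.1 ⟶ t)) →
      (Σ cd : C × C, (s ⟶ cd.1 ⊗ (cd.2 ⟹ a)) × ((cd.2 ⟹ b) ⊗ cd.1 ⟶ t)) → Prop :=
  fun x y => ∃ (f : x.1.1 ⟶ y.1.1) (g : y.1.2 ⟶ x.1.2),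
    y.2.1 = x.2.1 ≫ (f ⊗ₘ (pre g).app a) ∧
      x.2.2 = ((pre g).app b ⊗ₘ f) ≫ y.2.2

/-- The existential optic for the action `(c,d) ↦ c ⊗ (d ⟹ (−))`. -/
def GlassOptic (s t a b : C) : Type u := Quot (GlassRel s t a b)

open CartesianMonoidalCategory

lemma comp_pre_app {X A B Z : C} (h : X ⟶ A ⟹ Z) (ψ : B ⟶ A) :
    h ≫ (pre ψ).app Z = curry (ψ ▷ X ≫ uncurry h) := by
  rw [eq_curry_iff, uncurry_natural_left, uncurry_pre, whisker_exchange_assoc, uncurry_eq]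

/-- The key auxiliary morphism: from `f₂ : s ⟶ (d ⟹ a)` produce `d ⟶ (s ⟹ a)`. -/
def glassK {s d a : C} (f₂ : s ⟶ d ⟹ a) : d ⟶ s ⟹ a :=
  curry ((β_ s d).hom ≫ uncurry f₂)

def glassToConcrete (s t a b : C)
    (x : Σ cd : C × C, (s ⟶ cd.1 ⊗ (cd.2 ⟹ a)) × ((cd.2 ⟹ b) ⊗ cd.1 ⟶ t)) :
    ((s ⟹ a) ⟹ b) ⊗ s ⟶ t :=
  ((pre (glassK (x.2.1 ≫ snd _ _))).app b ⊗ₘ (x.2.1 ≫ fst _ _)) ≫ x.2.2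

lemma glassK_natural {s a : C} {c c' d d' : C} (f : s ⟶ c ⊗ (d ⟹ a))
    (φ : c ⟶ c') (ψ : d' ⟶ d) :
    glassK ((f ≫ (φ ⊗ₘ (pre ψ).app a)) ≫ snd _ _) = ψ ≫ glassK (f ≫ snd _ _) := by
  unfold glassK
  apply uncurry_injective
  have h1 : (f ≫ (φ ⊗ₘ (pre ψ).app a)) ≫ snd _ _ = (f ≫ snd _ _) ≫ (pre ψ).app a := by
    rw [Category.assoc, tensorHom_snd]; simp
  rw [h1, comp_pre_app]
  simp only [uncurry_curry, uncurry_natural_left]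
  rw [← BraidedCategory.braiding_naturality_right_assoc]

lemma glassToConcrete_rel (s t a b : C) :
    ∀ x y, GlassRel s t a b x y → glassToConcrete s t a b x = glassToConcrete s t a b y := by
  rintro ⟨⟨c, d⟩, f, g⟩ ⟨⟨c', d'⟩, f', g'⟩ ⟨φ, ψ, h1, h2⟩
  dsimp at φ ψ h1 h2 ⊢
  unfold glassToConcrete
  dsimp
  rw [h1, h2]
  rw [glassK_natural, pre_map]
  have hfst : (f ≫ (φ ⊗ₘ (pre ψ).app a)) ≫ fst _ _ = (f ≫ fst _ _) ≫ φ := by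
    rw [Category.assoc, tensorHom_fst]; simp
  rw [hfst]
  rw [show ((pre (glassK (f ≫ snd _ _)) ≫ pre ψ).app b ⊗ₘ (f ≫ fst _ _) ≫ φ)
      = ((pre (glassK (f ≫ snd _ _))).app b ⊗ₘ (f ≫ fst _ _)) ≫ ((pre ψ).app b ⊗ₘ φ) by
    rw [tensorHom_comp_tensorHom]; rfl]
  simp [Category.assoc]

def glassInv (s t a b : C) : GlassOptic s t a b → (((s ⟹ a) ⟹ b) ⊗ s ⟶ t) :=
  Quot.lift (glassToConcrete s t a b) (glassToConcrete_rel s t a b)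

/-- canonical element -/
def glassEta (s a : C) : s ⟶ s ⊗ ((s ⟹ a) ⟹ a) :=
  lift (𝟙 s) (curry ((β_ (s ⟹ a) s).hom ≫ (ihom.ev s).app a))

lemma glassK_eta (s a : C) :
    glassK (glassEta s a ≫ snd _ _) = 𝟙 (s ⟹ a) := by
  unfold glassK glassEta
  rw [lift_snd, uncurry_curry, ← Category.assoc, SymmetricCategory.symmetry,
    Category.id_comp, ← uncurry_id_eq_ev, curry_uncurry]

lemma eta_pre_glassK {s d a : C} (f₂ : s ⟶ d ⟹ a) :
    curry ((β_ (s ⟹ a) s).hom ≫ (ihom.ev s).app a) ≫ (pre (glassK f₂)).app a = f₂ := by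
  apply uncurry_injective
  rw [uncurry_natural_left, uncurry_pre]
  simp only [Functor.id_obj]
  rw [whisker_exchange_assoc, ← uncurry_eq, uncurry_curry,
    BraidedCategory.braiding_naturality_left_assoc, ← uncurry_eq]
  unfold glassK
  rw [uncurry_curry, ← Category.assoc, SymmetricCategory.symmetry, Category.id_comp]

lemma glassInv_mk_eta (s t a b : C) (g : ((s ⟹ a) ⟹ b) ⊗ s ⟶ t) :
    glassInv s t a b (Quot.mk _ ⟨(s, s ⟹ a), glassEta s a, g⟩) = g := by
  show ((pre (glassK (glassEta s a ≫ snd _ _))).app b ⊗ₘ (glassEta s a ≫ fst _ _)) ≫ g = g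
  rw [glassK_eta, pre_id]
  unfold glassEta
  rw [lift_fst]
  simp


/-- Glasses are optics for the action `(c,d) ↦ c ⊗ (d ⟹ (−))`: the canonical (natural) map
from the concrete form `C(((s ⟹ a) ⟹ b) ⊗ s, t)` to the coend
`∫^{(c,d)} C(s, c ⊗ (d ⟹ a)) × C((d ⟹ b) ⊗ c, t)` is a bijection. -/
theorem glass_is_optic (s t a b : C) :
    Function.Bijective (fun g : ((s ⟹ a) ⟹ b) ⊗ s ⟶ t =>
      (Quot.mk (GlassRel s t a b)
        ⟨(s, s ⟹ a),
          CartesianMonoidalCategory.lift (𝟙 s)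
            (MonoidalClosed.curry ((β_ (s ⟹ a) s).hom ≫ (ihom.ev s).app a)),
          g⟩ : GlassOptic s t a b)) := by
  constructor
  · intro g₁ g₂ h
    exact (glassInv_mk_eta s t a b g₁).symm.trans
      ((congrArg (glassInv s t a b) h).trans (glassInv_mk_eta s t a b g₂))
  · refine Quot.ind (fun x => ?_) ; obtain ⟨⟨c, d⟩, f, g⟩ := x
    refine ⟨glassToConcrete s t a b ⟨(c, d), f, g⟩, Quot.sound ?_⟩
    refine ⟨f ≫ fst _ _, glassK (f ≫ snd _ _), ?_, rfl⟩
    show f = glassEta s a ≫ ((f ≫ fst _ _) ⊗ₘ (pre (glassK (f ≫ snd _ _))).app a)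
    unfold glassEta
    rw [lift_map, Category.id_comp, eta_pre_glassK]
    apply CartesianMonoidalCategory.hom_ext <;> simp
end

section
/- For every functor T : Set ⥤ Set and every set a, there is an isomorphism ∫_{F ∈ App} ∫_{b ∈ Set} ((a → F b) → F (T b)) ≅ Σ_{n∈ℕ} aⁿ × T(Fin n), natural in T and a; that is, the end over all applicative functors F of the right Kan extension Ran_F(F ∘ T) evaluated at a is the set Σ_n aⁿ × T(n). -/
/-!
For every functor `T : Set ⥤ Set` and every set `a`, the end over all applicative functors
`F` of `Ran_F (F ∘ T)` evaluated at `a`, i.e.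
`∫_{F ∈ App} ∫_{b ∈ Set} ((a → F b) → F (T b))`, is isomorphic to `Σₙ aⁿ × T (Fin n)`.
Here `App` is the category of lax monoidal endofunctors of `(Set, ×)` with monoidal
natural transformations, and the end is realized as the type of families satisfying the
two dinaturality conditions (in `b` and in `F`).
-/

open CategoryTheory

/-- The end `∫_{F ∈ App} ∫_{b ∈ Set} ((a → F b) → F (T b)) = ∫_{F ∈ App} Ran_F (F ∘ T) (a)`:
families of maps `(a → F b) → F (T b)`, dinatural in `b ∈ Set` and in `F ∈ App`. -/
structure TraversalEnd (T : Type ⥤ Type) (a : Type) where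
  /-- the underlying family of the end -/
  e : ∀ (P : AppFunctor) (b : Type), (a → P.F.obj b) → P.F.obj (T.obj b)
  dinat_inner : ∀ (P : AppFunctor) {b b' : Type} (f : b → b') (k : a → P.F.obj b),
    P.F.map (T.map (TypeCat.ofHom f)) (e P b k) = e P b' (fun x => P.F.map (TypeCat.ofHom f) (k x))
  dinat_outer : ∀ (P Q : AppFunctor) (φ : AppHom P Q) (b : Type) (k : a → P.F.obj b),
    φ.η.app (T.obj b) (e P b k) = e Q b (fun x => φ.η.app b (k x))

namespace Trav

theorem fmap_fmap (G : Type ⥤ Type) {X Y Z : Type} (f : X → Y) (g : Y → Z) (x : G.obj X) :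
    G.map (↾g) (G.map (↾f) x) = G.map (↾fun v => g (f v)) x := by
  have := G.map_comp_apply (↾f) (↾g) x
  exact (this).symm

theorem fmap_id (G : Type ⥤ Type) {X : Type} (x : G.obj X) : G.map (↾fun v => v) x = x := by
  have := G.map_id_apply X x
  exact this

theorem map_congr (G : Type ⥤ Type) {X Y : Type} {f g : X → Y} (h : ∀ v, f v = g v)
    (x : G.obj X) : G.map (↾f) x = G.map (↾g) x :=
  congrArg (fun φ => G.map (↾φ) x) (funext h)

theorem nat_app {G H : Type ⥤ Type} (η : G ⟶ H) {X Y : Type} (f : X → Y) (x : G.obj X) :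
    η.app Y (G.map (↾f) x) = H.map (↾f) (η.app X x) := by
  have := η.naturality_apply (↾f) x
  exact this

/-- n-fold sequencing for an applicative. -/
def collect (P : AppFunctor) (β : Type) : ∀ n : ℕ, (Fin n → P.F.obj β) → P.F.obj (Fin n → β)
  | 0, _ => P.F.map (↾fun (_ : Unit) => (Fin.elim0 : Fin 0 → β)) (P.unit ())
  | n+1, g => P.F.map (↾fun p : β × (Fin n → β) => (Fin.cons p.1 p.2 : Fin (n+1) → β))
      (P.mult _ _ (g 0, collect P β n (fun i => g i.succ)))

theorem collect_hom {P Q : AppFunctor} (φ : AppHom P Q) (β : Type) (n : ℕ)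
    (g : Fin n → P.F.obj β) :
    φ.η.app _ (collect P β n g) = collect Q β n (fun i => φ.η.app β (g i)) := by
  induction n with
  | zero => rw [collect, nat_app, φ.unit_comm]; rfl
  | succ n ih =>
      rw [collect, nat_app, φ.mult_comm, ih]; rfl

theorem collect_map (P : AppFunctor) {β β' : Type} (f : β → β') (n : ℕ)
    (g : Fin n → P.F.obj β) :
    collect P β' n (fun i => P.F.map (↾f) (g i)) = P.F.map (↾fun r i => f (r i)) (collect P β n g) := by
  induction n with
  | zero =>
      rw [collect, collect, fmap_fmap]
      exact map_congr P.F (fun u => funext fun i => i.elim0) _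
  | succ n ih =>
      rw [collect, collect, ih, fmap_fmap]
      have hmn := P.mult_natural f (fun (r : Fin n → β) (i : Fin n) => f (r i)) (g 0)
        (collect P β n (fun i => g i.succ))
      rw [← hmn, fmap_fmap]
      refine map_congr P.F (fun p => funext fun i => ?_) _
      refine Fin.cases ?_ (fun j => ?_) i <;> rfl

theorem collect_cast (P : AppFunctor) (β : Type) {n n' : ℕ} (e : n = n')
    (g : Fin n → P.F.obj β) :
    collect P β n' (fun i => g (Fin.cast e.symm i)) =
      P.F.map (↾fun (r : Fin n → β) i => r (Fin.cast e.symm i)) (collect P β n g) := by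
  subst e
  exact (fmap_id P.F _).symm

/-- the canonical traversal attached to `(n, v, t)` -/
def ofTuple (T : Type ⥤ Type) (a : Type) (s : Σ n : ℕ, (Fin n → a) × T.obj (Fin n)) :
    TraversalEnd T a where
  e P b k := P.F.map (↾fun r : Fin s.1 → b => T.map (↾r) s.2.2) (collect P b s.1 (fun i => k (s.2.1 i)))
  dinat_inner := by
    intro P b b' f k
    show _ = P.F.map (↾fun r : Fin s.1 → b' => T.map (↾r) s.2.2)
      (collect P b' s.1 fun i => P.F.map (↾f) (k (s.2.1 i)))
    rw [show ∀ y, P.F.map (T.map (↾f)) y = P.F.map (↾fun z => T.map (↾f) z) y from fun y => rfl, fmap_fmap, collect_map, fmap_fmap]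
    exact map_congr P.F (fun r => fmap_fmap T r f s.2.2) _
  dinat_outer := by
    intro P Q φ b k
    rw [nat_app, collect_hom]


/-! ### The list-writer / numbering applicative, used for injectivity -/

def LWApp (a : Type) : AppFunctor where
  F := { obj := fun X => List a × (ℕ → X)
         map := fun f => ↾fun p => (p.1, fun i => f (p.2 i))
         map_id := fun X => rfl
         map_comp := fun f g => rfl }
  unit u := ([], fun _ => u)
  mult X Y p := (p.1.1 ++ p.2.1, fun s => (p.1.2 s, p.2.2 (s + p.1.1.length)))
  mult_natural := fun f g x y => rfl
  mult_assoc := by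
    intro X Y Z x y z
    refine Prod.ext (List.append_assoc _ _ _) ?_
    funext s
    show (x.2 s, (y.2 _, z.2 _)) = (x.2 s, (y.2 _, z.2 _))
    simp [Nat.add_assoc]
  left_unit := fun X x => rfl
  right_unit := by
    intro X x
    exact Prod.ext (List.append_nil _) rfl

theorem collect_LW (a : Type) (n : ℕ) (v : Fin n → a) :
    collect (LWApp a) ℕ n (fun i => ([v i], fun s => s)) =
      (List.ofFn v, fun s (i : Fin n) => s + i.val) := by
  induction n with
  | zero =>
      refine Prod.ext rfl ?_
      funext s i
      exact i.elim0
  | succ n ih =>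
      erw [collect]
      have : (fun i : Fin n => ((fun i : Fin (n+1) => ((([v i], fun s => s)) : List a × (ℕ → ℕ))) i.succ)) = fun i : Fin n => (([v i.succ], fun s => s) : List a × (ℕ → ℕ)) := rfl
      rw [this, ih]
      refine Prod.ext ?_ ?_
      · show v 0 :: List.ofFn (fun i => v i.succ) = List.ofFn v
        exact (List.ofFn_succ (f := v)).symm
      · funext s j
        refine Fin.cases ?_ (fun i => ?_) j
        · rfl
        · show s + 1 + i.val = s + (i.val + 1)
          omega

/-! ### The `Option` applicative, used for injectivity in the empty-shape case -/

def OptApp : AppFunctor where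
  F := { obj := fun X => Option X
         map := fun f => ↾Option.map f
         map_id := by intro X; refine ConcreteCategory.hom_ext _ _ (fun o => ?_); cases o <;> rfl
         map_comp := by intro X Y Z f g; refine ConcreteCategory.hom_ext _ _ (fun o => ?_); cases o <;> rfl }
  unit u := some u
  mult X Y p := p.1.bind fun x => p.2.map fun y => (x, y)
  mult_natural := by intro X X' Y Y' f g x y; cases x <;> cases y <;> rfl
  mult_assoc := by intro X Y Z x y z; cases x <;> cases y <;> cases z <;> rfl
  left_unit := by intro X x; cases x <;> rfl
  right_unit := by intro X x; cases x <;> rfl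

theorem ofTuple_injective (T : Type ⥤ Type) (a : Type) :
    Function.Injective (ofTuple T a) := by
  rintro ⟨n, v, t⟩ ⟨n', v', t'⟩ h
  have h1 := congrArg (fun E : TraversalEnd T a =>
    E.e (LWApp a) ℕ (fun x => ([x], fun s => s))) h
  simp only [ofTuple] at h1
  rw [collect_LW, collect_LW] at h1
  have hfst := congrArg Prod.fst h1
  have hsnd := congrArg Prod.snd h1
  
  have hnv : (⟨n, v⟩ : Σ m : ℕ, Fin m → a) = ⟨n', v'⟩ := List.ofFn_inj'.mp hfst
  obtain ⟨rfl, hv⟩ := Sigma.mk.inj_iff.mp hnv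
  have hv' : v = v' := eq_of_heq hv
  subst hv'
  refine congrArg _ (congrArg _ ?_)
  -- it remains to show `t = t'`
  match n, v, t, t' with
  | 0, v, t, t' =>
      have h2 := congrArg (fun E : TraversalEnd T a =>
        E.e OptApp (Fin 0) (fun _ => none)) h
      simp only [ofTuple] at h2
      have h3 : some (T.map (↾(Fin.elim0 : Fin 0 → Fin 0)) t)
          = some (T.map (↾(Fin.elim0 : Fin 0 → Fin 0)) t') := h2
      have h4 := Option.some.inj h3
      have he : (Fin.elim0 : Fin 0 → Fin 0) = fun i => i := funext fun i => i.elim0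
      rw [he] at h4
      rw [fmap_id, fmap_id] at h4
      exact h4
  | (m+1), v, t, t' =>
      have h5 := congrFun hsnd 0
      have h6 : T.map (↾fun i : Fin (m+1) => 0 + i.val) t
          = T.map (↾fun i : Fin (m+1) => 0 + i.val) t' := h5
      have h7 := congrArg (T.map (↾fun j : ℕ => (⟨j % (m+1), Nat.mod_lt _ (Nat.succ_pos m)⟩ : Fin (m+1)))) h6
      rw [fmap_fmap, fmap_fmap] at h7
      have h8 : ∀ i : Fin (m+1),
          (⟨(0 + i.val) % (m+1), Nat.mod_lt _ (Nat.succ_pos m)⟩ : Fin (m+1)) = i := by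
        intro i
        exact Fin.ext (by simpa using Nat.mod_eq_of_lt i.isLt)
      rw [map_congr T h8, fmap_id] at h7
      rw [map_congr T h8, fmap_id] at h7
      exact h7


/-- carrier of the free applicative on `a`-reads with replacement values in `b` -/
def UObj (a b X : Type) : Type := Σ n : ℕ, (Fin n → a) × ((Fin n → b) → X)

theorem UObj.ext {a b X : Type} {n n' : ℕ} (h : n = n')
    {v : Fin n → a} {v' : Fin n' → a} {g : (Fin n → b) → X} {g' : (Fin n' → b) → X}
    (hv : ∀ i : Fin n', v (Fin.cast h.symm i) = v' i)
    (hg : ∀ r : Fin n' → b, g (fun i => r (Fin.cast h i)) = g' r) :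
    (⟨n, v, g⟩ : UObj a b X) = ⟨n', v', g'⟩ := by
  subst h
  exact congrArg _ (Prod.ext (funext hv) (funext hg))

theorem UObj.eq_elim {a b X : Type} {x y : UObj a b X} (h : x = y) :
    ∃ e : x.1 = y.1, (∀ i : Fin y.1, x.2.1 (Fin.cast e.symm i) = y.2.1 i) ∧
      (∀ r : Fin y.1 → b, x.2.2 (fun i => r (Fin.cast e i)) = y.2.2 r) := by
  subst h
  exact ⟨rfl, fun i => rfl, fun r => rfl⟩

/-- the free applicative -/
def UApp (a b : Type) : AppFunctor where
  F := { obj := UObj a b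
         map := fun f => ↾fun x => ⟨x.1, x.2.1, fun r => f (x.2.2 r)⟩
         map_id := fun X => rfl
         map_comp := fun f g => rfl }
  unit u := ⟨0, Fin.elim0, fun _ => u⟩
  mult X Y p := ⟨p.1.1 + p.2.1, Fin.append p.1.2.1 p.2.2.1,
    fun r => (p.1.2.2 (fun i => r (Fin.castAdd _ i)), p.2.2.2 (fun i => r (Fin.natAdd _ i)))⟩
  mult_natural := fun f g x y => rfl
  mult_assoc := by
    intro X Y Z x y z
    dsimp only
    obtain ⟨n, v, g⟩ := x; obtain ⟨m, w, h⟩ := y; obtain ⟨p, u, l⟩ := z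
    refine UObj.ext (Nat.add_assoc n m p) (fun i => ?_) (fun r => ?_)
    · rw [Fin.append_assoc]
      show Fin.append v (Fin.append w u) (Fin.cast _ _) = Fin.append v (Fin.append w u) i
      exact congrArg _ (Fin.ext rfl)
    · show (g _, (h _, l _)) = (g _, (h _, l _))
      refine congrArg₂ Prod.mk (congrArg g (funext fun i => congrArg r (Fin.ext ?_)))
        (congrArg₂ Prod.mk (congrArg h (funext fun i => congrArg r (Fin.ext ?_)))
          (congrArg l (funext fun i => congrArg r (Fin.ext ?_)))) <;>
        simp [Fin.coe_castAdd, Fin.coe_natAdd] <;> omega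
  left_unit := by
    intro X x
    dsimp only
    obtain ⟨n, v, g⟩ := x
    refine UObj.ext (Nat.zero_add n) (fun i => ?_) (fun r => ?_)
    · rw [Fin.elim0_append]
      exact congrArg _ (Fin.ext rfl)
    · show g _ = g r
      exact congrArg g (funext fun i => congrArg r (Fin.ext (by simp)))
  right_unit := by
    intro X x
    dsimp only
    obtain ⟨n, v, g⟩ := x
    refine UObj.ext (Nat.add_zero n) (fun i => ?_) (fun r => ?_)
    · rw [Fin.append_elim0]
      exact congrArg _ (Fin.ext rfl)
    · show g _ = g r
      exact congrArg g (funext fun i => congrArg r (Fin.ext (by simp)))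


/-! ### pointwise `Fin` lemmas -/

theorem comp_append {α β : Type} (f : α → β) {n m : ℕ} (v : Fin n → α) (w : Fin m → α) :
    (fun i => f (Fin.append v w i)) = Fin.append (fun i => f (v i)) (fun i => f (w i)) := by
  funext i
  refine Fin.addCases (fun ii => ?_) (fun jj => ?_) i <;> simp

theorem cons_append_pt {β : Type} {n m : ℕ} (x : β) (rn : Fin n → β) (rm : Fin m → β)
    (i : Fin ((n+1)+m)) :
    Fin.append (Fin.cons x rn) rm i
      = (Fin.cons x (Fin.append rn rm) : Fin ((n+m)+1) → β) (Fin.cast (Nat.succ_add n m) i) := by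
  refine Fin.addCases (fun ii => ?_) (fun jj => ?_) i
  · rw [Fin.append_left]
    refine Fin.cases ?_ (fun i' => ?_) ii
    · have h0 : Fin.cast (Nat.succ_add n m) (Fin.castAdd m (0 : Fin (n+1))) = 0 :=
        Fin.ext (by simp)
      rw [h0, Fin.cons_zero, Fin.cons_zero]
    · have h1 : Fin.cast (Nat.succ_add n m) (Fin.castAdd m i'.succ)
          = Fin.succ (Fin.castAdd m i') := Fin.ext (by simp)
      rw [h1, Fin.cons_succ, Fin.cons_succ, Fin.append_left]
  · have h2 : Fin.cast (Nat.succ_add n m) (Fin.natAdd (n+1) jj)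
        = Fin.succ (Fin.natAdd n jj) := Fin.ext (by simp [Nat.succ_add, Nat.add_comm])
    rw [Fin.append_right, h2, Fin.cons_succ, Fin.append_right]

/-! ### `collect` of an appended family -/

theorem collect_append (P : AppFunctor) (β : Type) {m : ℕ} (c₂ : Fin m → P.F.obj β) :
    ∀ {n : ℕ} (c₁ : Fin n → P.F.obj β),
    collect P β (n+m) (Fin.append c₁ c₂) =
      P.F.map (↾fun p : (Fin n → β) × (Fin m → β) => Fin.append p.1 p.2)
        (P.mult _ _ (collect P β n c₁, collect P β m c₂)) := by
  intro n
  induction n with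
  | zero =>
      intro c₁
      have e : m = 0 + m := (Nat.zero_add m).symm
      have h1 : Fin.append c₁ c₂ = fun i => c₂ (Fin.cast e.symm i) := by
        rw [Fin.append_left_nil c₁ c₂ rfl]
        rfl
      rw [h1, collect_cast P β e c₂]
      rw [collect]
      symm
      have hmn := P.mult_natural (fun _ : Unit => (Fin.elim0 : Fin 0 → β)) (fun r : Fin m → β => r)
        (P.unit ()) (collect P β m c₂)
      rw [fmap_id] at hmn
      rw [← hmn, fmap_fmap]
      have hcomp : ∀ q : Unit × (Fin m → β),
          Fin.append ((Prod.map (fun _ : Unit => (Fin.elim0 : Fin 0 → β)) (fun r => r)) q).1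
              ((Prod.map (fun _ : Unit => (Fin.elim0 : Fin 0 → β)) (fun r => r)) q).2
            = (fun r : Fin m → β => fun i => r (Fin.cast e.symm i)) (Prod.snd q) := by
        intro q
        funext i
        rw [Fin.append_left_nil _ _ rfl]
        rfl
      rw [map_congr P.F (fun q => hcomp q)]
      conv_rhs => rw [← P.left_unit (Fin m → β) (collect P β m c₂)]
      rw [fmap_fmap]
  | succ n ih =>
      intro c₁
      have e : (n+m)+1 = (n+1)+m := (Nat.succ_add n m).symm
      have h1 : Fin.append c₁ c₂
          = fun i => (fun j : Fin ((n+m)+1) => Fin.append c₁ c₂ (Fin.cast e j)) (Fin.cast e.symm i) := by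
        funext i
        exact congrArg _ (Fin.ext rfl)
      rw [h1, collect_cast P β e (fun j : Fin ((n+m)+1) => Fin.append c₁ c₂ (Fin.cast e j))]
      rw [collect]
      have hg0 : Fin.append c₁ c₂ (Fin.cast e 0) = c₁ 0 := by
        have h0 : Fin.cast e (0 : Fin ((n+m)+1)) = Fin.castAdd m (0 : Fin (n+1)) := Fin.ext rfl
        rw [h0, Fin.append_left]
      have hgs : (fun i : Fin (n+m) => Fin.append c₁ c₂ (Fin.cast e i.succ))
          = Fin.append (fun i : Fin n => c₁ i.succ) c₂ := by
        funext i
        refine Fin.addCases (fun ii => ?_) (fun jj => ?_) i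
        · have h2 : Fin.cast e (Fin.castAdd m ii).succ = Fin.castAdd m (ii.succ) :=
            Fin.ext (by simp)
          rw [h2, Fin.append_left, Fin.append_left]
        · have h3 : Fin.cast e (Fin.natAdd n jj).succ = Fin.natAdd (n+1) jj :=
            Fin.ext (by simp [Nat.succ_add, Nat.add_comm])
          rw [h3, Fin.append_right, Fin.append_right]
      rw [hg0, hgs, ih]
      -- pull the inner map out of mult
      have hL := P.mult_natural (fun x : β => x)
        (fun p : (Fin n → β) × (Fin m → β) => Fin.append p.1 p.2)
        (c₁ 0) (P.mult _ _ (collect P β n (fun i => c₁ i.succ), collect P β m c₂))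
      rw [fmap_id] at hL
      rw [← hL]
      have hA := P.mult_assoc β (Fin n → β) (Fin m → β) (c₁ 0)
        (collect P β n (fun i => c₁ i.succ)) (collect P β m c₂)
      rw [← hA]
      -- right-hand side
      rw [collect]
      have hR := P.mult_natural (fun p : β × (Fin n → β) => (Fin.cons p.1 p.2 : Fin (n+1) → β))
        (fun r : Fin m → β => r)
        (P.mult _ _ (c₁ 0, collect P β n (fun i => c₁ i.succ))) (collect P β m c₂)
      rw [fmap_id] at hR
      rw [← hR]
      simp only [fmap_fmap]
      refine map_congr P.F (fun q => ?_) _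
      funext i
      exact (cons_append_pt q.1.1 q.1.2 q.2 i).symm

/-! ### the run homomorphism determined by `k : a → P b` -/

def runHom (P : AppFunctor) (a b : Type) (k : a → P.F.obj b) : AppHom (UApp a b) P where
  η := { app := fun X => ↾fun x => P.F.map (↾x.2.2) (collect P b x.1 (fun i => k (x.2.1 i)))
         naturality := by
           intro X Y f
           refine ConcreteCategory.hom_ext _ _ (fun x => ?_)
           exact (fmap_fmap P.F x.2.2 f (collect P b x.1 (fun i => k (x.2.1 i)))).symm }
  unit_comm := by
    intro u
    show P.F.map (↾fun _ => u) (collect P b 0 _) = P.unit u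
    erw [collect, fmap_fmap]
    cases u
    exact fmap_id P.F (P.unit ())
  mult_comm := by
    intro X Y x y
    obtain ⟨n, v, g⟩ := x
    obtain ⟨m, w, h⟩ := y
    show P.F.map _ (collect P b (n+m) (fun i => k (Fin.append v w i))) = _
    rw [comp_append k v w, collect_append P b _ _]
    erw [fmap_fmap]
    have hmn := P.mult_natural g h (collect P b n (fun i => k (v i)))
      (collect P b m (fun i => k (w i)))
    erw [← hmn]
    refine map_congr P.F (fun p => ?_) _
    show (g _, h _) = (g p.1, h p.2)
    refine congrArg₂ Prod.mk (congrArg g (funext fun i => ?_)) (congrArg h (funext fun i => ?_))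
    · exact Fin.append_left p.1 p.2 i
    · exact Fin.append_right p.1 p.2 i

/-- the generic effectful computation -/
def k0 (a b : Type) : a → (UApp a b).F.obj b := fun x => ⟨1, fun _ => x, fun r => r 0⟩

theorem runHom_k0 (P : AppFunctor) (a b : Type) (k : a → P.F.obj b) (x : a) :
    (runHom P a b k).η.app b (k0 a b x) = k x := by
  show P.F.map (↾fun r : Fin 1 → b => r 0) (collect P b 1 (fun _ => k x)) = k x
  rw [collect, collect]
  have hmn := P.mult_natural (fun v : b => v) (fun _ : Unit => (Fin.elim0 : Fin 0 → b))
    (k x) (P.unit ())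
  rw [fmap_id] at hmn
  rw [← hmn]
  simp only [fmap_fmap]
  exact P.right_unit b (k x)

/-! ### the precomposition homomorphism -/

def precompHom (a : Type) {b b' : Type} (f : b → b') : AppHom (UApp a b') (UApp a b) where
  η := { app := fun X => ↾fun x => ⟨x.1, x.2.1, fun r => x.2.2 (fun i => f (r i))⟩
         naturality := fun X Y g => rfl }
  unit_comm := fun u => rfl
  mult_comm := fun X Y x y => rfl

/-- the generic element -/
def xiE (T : Type ⥤ Type) (a : Type) (E : TraversalEnd T a) (b : Type) : UObj a b (T.obj b) :=
  E.e (UApp a b) b (k0 a b)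

theorem star (T : Type ⥤ Type) (a : Type) (E : TraversalEnd T a) {b b' : Type} (f : b → b') :
    (⟨(xiE T a E b').1, (xiE T a E b').2.1,
      fun r : Fin (xiE T a E b').1 → b => (xiE T a E b').2.2 (fun i => f (r i))⟩
        : UObj a b (T.obj b'))
    = ⟨(xiE T a E b).1, (xiE T a E b).2.1, fun r => T.map (↾f) ((xiE T a E b).2.2 r)⟩ := by
  have h1 := E.dinat_outer (UApp a b') (UApp a b) (precompHom a f) b' (k0 a b')
  have h2 : (fun x => (precompHom a f).η.app b' (k0 a b' x))
      = fun x => (UApp a b).F.map (↾f) (k0 a b x) := rfl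
  rw [h2] at h1
  have h3 := E.dinat_inner (UApp a b) f (k0 a b)
  exact h1.trans h3.symm

theorem canonical (T : Type ⥤ Type) (a : Type) (E : TraversalEnd T a) :
    ∃ s : Σ n : ℕ, (Fin n → a) × T.obj (Fin n),
      ∀ b : Type, xiE T a E b = ⟨s.1, s.2.1, fun r => T.map (↾r) s.2.2⟩ := by
  obtain ⟨eF, hvF, hgF⟩ :=
    UObj.eq_elim (star T a E (fun x : Empty => (x.elim : Fin (xiE T a E Empty).1)))
  refine ⟨⟨(xiE T a E Empty).1, (xiE T a E Empty).2.1,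
    (xiE T a E (Fin (xiE T a E Empty).1)).2.2 (fun i => Fin.cast eF i)⟩, fun b => ?_⟩
  obtain ⟨e, hv, hg⟩ := UObj.eq_elim (star T a E (fun x : Empty => (x.elim : b)))
  refine UObj.ext e hv (fun r => ?_)
  obtain ⟨e', hv', hg'⟩ := UObj.eq_elim (star T a E r)
  have h5 := hg' (fun j => Fin.cast eF j)
  have harg : (fun i => r (Fin.cast e i)) = fun i => r (Fin.cast eF (Fin.cast e' i)) :=
    funext fun i => congrArg r (Fin.ext rfl)
  rw [harg]
  exact h5

theorem TraversalEnd.ext' {T : Type ⥤ Type} {a : Type} {E E' : TraversalEnd T a}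
    (h : E.e = E'.e) : E = E' := by
  cases E
  cases E'
  cases h
  rfl

theorem ofTuple_surjective (T : Type ⥤ Type) (a : Type) :
    Function.Surjective (ofTuple T a) := by
  intro E
  obtain ⟨s, hs⟩ := canonical T a E
  refine ⟨s, TraversalEnd.ext' ?_⟩
  funext P b k
  have h1 := E.dinat_outer (UApp a b) P (runHom P a b k) b (k0 a b)
  have h2 : (fun x => (runHom P a b k).η.app b (k0 a b x)) = k :=
    funext fun x => runHom_k0 P a b k x
  rw [h2] at h1
  exact (congrArg ((runHom P a b k).η.app (T.obj b)) (hs b)).symm.trans h1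

end Trav

/-- `∫_{F ∈ App} Ran_F (F ∘ T) (a) ≅ Σₙ aⁿ × T (Fin n)`, for every `T : Set ⥤ Set` and
every set `a`. -/
theorem end_of_ran_applicatives (T : Type ⥤ Type) (a : Type) :
    Nonempty (TraversalEnd T a ≃ Σ n : ℕ, (Fin n → a) × T.obj (Fin n)) := by
  exact ⟨(Equiv.ofBijective (Trav.ofTuple T a)
      ⟨Trav.ofTuple_injective T a, Trav.ofTuple_surjective T a⟩).symm⟩
end

section
/- The shape–contents endofunctor K of [Set, Set], defined on objects by (K T)(a) = Σ_{n∈ℕ} T(Fin n) × (Fin n → a) and on natural transformations h : T ⟶ R by (K h)(n; s, c) = (n; h(s), c), carries a comonad structure with counit ε(n; s, c) = T(c)(s) (evaluating T on the contents function and applying to the shape) and comultiplication δ(n; s, c) = (n; (n; s, id), c). -/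
/-!
The shape–contents endofunctor `K` of `[Set, Set]`, defined on objects by
`(K T)(a) = Σₙ T(Fin n) × (Fin n → a)` and on natural transformations `h : T ⟶ R` by
`(K h)(n; s, c) = (n; h s, c)`, carries a comonad structure with counit
`ε (n; s, c) = T(c)(s)` and comultiplication `δ (n; s, c) = (n; (n; s, id), c)`.
We define `K`, `ε` and `δ` explicitly and the theorem asserts the comonad laws.
-/

open CategoryTheory

/-- The shape–contents functor on objects: `(K T)(a) = Σₙ T(Fin n) × (Fin n → a)`. -/
@[simps]
def KObj (T : Type ⥤ Type) : Type ⥤ Type where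
  obj a := Σ n : ℕ, T.obj (Fin n) × (Fin n → a)
  map f := TypeCat.ofHom fun x => ⟨x.1, x.2.1, f ∘ x.2.2⟩

/-- The shape–contents endofunctor `K` of `[Set, Set]`. -/
@[simps]
def K : (Type ⥤ Type) ⥤ (Type ⥤ Type) where
  obj := KObj
  map h :=
    { app := fun a => TypeCat.ofHom fun x => ⟨x.1, h.app (Fin x.1) x.2.1, x.2.2⟩
      naturality := fun _ _ _ => rfl }
  map_id := by intros; rfl
  map_comp := by intros; rfl

/-- The counit `ε : K T ⟶ T`, evaluating the functor `T` on the contents function and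
applying the result to the shape: `ε (n; s, c) = T(c)(s)`. -/
def Keps (T : Type ⥤ Type) : K.obj T ⟶ T where
  app a := TypeCat.ofHom fun x => T.map (TypeCat.ofHom x.2.2) x.2.1
  naturality := by
    intro a b f
    ext x
    exact FunctorToTypes.map_comp_apply T (TypeCat.ofHom x.2.2) f x.2.1

/-- The comultiplication `δ : K T ⟶ K (K T)`, `δ (n; s, c) = (n; (n; s, id), c)`. -/
def Kdelta (T : Type ⥤ Type) : K.obj T ⟶ K.obj (K.obj T) where
  app a := TypeCat.ofHom fun x => ⟨x.1, ⟨x.1, x.2.1, id⟩, x.2.2⟩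
  naturality := fun _ _ _ => rfl

/-- The shape–contents endofunctor `K` together with the counit `ε (n; s, c) = T(c)(s)` and
the comultiplication `δ (n; s, c) = (n; (n; s, id), c)` is a comonad: counitality on both
sides and coassociativity hold. -/
theorem K_is_comonad :
    (∀ T : Type ⥤ Type, Kdelta T ≫ Keps (K.obj T) = 𝟙 (K.obj T)) ∧
    (∀ T : Type ⥤ Type, Kdelta T ≫ K.map (Keps T) = 𝟙 (K.obj T)) ∧
    (∀ T : Type ⥤ Type,
      Kdelta T ≫ Kdelta (K.obj T) = Kdelta T ≫ K.map (Kdelta T)) ∧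
    (∀ (T R : Type ⥤ Type) (h : T ⟶ R), K.map h ≫ Keps R = Keps T ≫ h) ∧
    (∀ (T R : Type ⥤ Type) (h : T ⟶ R),
      K.map h ≫ Kdelta R = Kdelta T ≫ K.map (K.map h)) := by
  refine ⟨?_, ?_, ?_, ?_, ?_⟩
  · intro T
    ext a x
    rfl
  · intro T
    ext a x
    obtain ⟨n, s, c⟩ := x
    show (⟨n, T.map (TypeCat.ofHom id) s, c⟩ : (K.obj T).obj a) = ⟨n, s, c⟩
    rw [show (TypeCat.ofHom (id : Fin n → Fin n)) = 𝟙 (Fin n) from rfl, T.map_id]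
    rfl
  · intro T
    ext a x
    rfl
  · intro T R h
    ext a x
    obtain ⟨n, s, c⟩ := x
    simp [Keps, Kdelta]
    exact (FunctorToTypes.naturality h (TypeCat.ofHom c) s).symm
  · intro T R h
    ext a x
    rfl
end

section
/- Every functor between Eilenberg–Moore categories commuting with the forgetful functors is induced by a monad morphism: let (S, μ, η) and (T, μ', η') be monads on the same category C and let A : T-Alg ⥤ S-Alg be a functor with U_S ∘ A = U_T, where U_S and U_T are the forgetful functors to C. Then there exists a monad morphism α : S ⟶ T (a natural transformation preserving units and multiplications, i.e. α ∘ η = η' and α ∘ μ = μ' ∘ (α ∗ α)) such that A is the functor induced by α, sending a T-algebra (x, ρ : T x → x) to the S-algebra (x, ρ ∘ α_x) and acting as the identity on underlying morphisms. -/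
open CategoryTheory Category

universe v u

namespace EMInducedAux

variable {C : Type u} [Category.{v} C] {S T : Monad C} (A : T.Algebra ⥤ S.Algebra)
  (hA : A ⋙ Monad.forget S = Monad.forget T)

include hA

lemma e (X : T.Algebra) : (A.obj X).A = X.A := Functor.congr_obj hA X

/-- The transported structure map of `A.obj X`, as an `S`-structure on `X.A`. -/
def b (X : T.Algebra) : (S : C ⥤ C).obj X.A ⟶ X.A :=
  (S : C ⥤ C).map (eqToHom (e A hA X).symm) ≫ (A.obj X).a ≫ eqToHom (e A hA X)

lemma map_f {X Y : T.Algebra} (f : X ⟶ Y) :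
    (A.map f).f = eqToHom (e A hA X) ≫ f.f ≫ eqToHom (e A hA Y).symm :=
  Functor.congr_hom hA f

lemma b_hom {X Y : T.Algebra} (f : X ⟶ Y) :
    (S : C ⥤ C).map f.f ≫ b A hA Y = b A hA X ≫ f.f := by
  have h := (A.map f).h
  rw [map_f A hA f] at h
  simp only [b, Functor.map_comp, assoc]
  rw [← cancel_epi ((S : C ⥤ C).map (eqToHom (e A hA X)))]
  simp only [← Functor.map_comp_assoc, eqToHom_trans, eqToHom_refl, Functor.map_id, id_comp]
  rw [reassoc_of% h]
  simp [eqToHom_map]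

lemma b_unit (X : T.Algebra) : S.η.app X.A ≫ b A hA X = 𝟙 X.A := by
  simp only [b]
  rw [← S.η.naturality_assoc]
  simp [(A.obj X).unit_assoc]

lemma b_assoc (X : T.Algebra) :
    S.μ.app X.A ≫ b A hA X = (S : C ⥤ C).map (b A hA X) ≫ b A hA X := by
  simp only [b]
  rw [← S.μ.naturality_assoc]
  simp only [Functor.comp_map, (A.obj X).assoc_assoc, ← Functor.map_comp_assoc]
  simp [eqToHom_map]

def bf (x : C) : (S : C ⥤ C).obj ((T : C ⥤ C).obj x) ⟶ (T : C ⥤ C).obj x :=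
  b A hA (T.free.obj x)

lemma bf_hom {x y : C} (f : x ⟶ y) :
    (S : C ⥤ C).map ((T : C ⥤ C).map f) ≫ bf A hA y = bf A hA x ≫ (T : C ⥤ C).map f :=
  b_hom A hA (T.free.map f)

lemma bf_unit (x : C) : S.η.app ((T : C ⥤ C).obj x) ≫ bf A hA x = 𝟙 _ :=
  b_unit A hA (T.free.obj x)

lemma bf_assoc (x : C) :
    S.μ.app ((T : C ⥤ C).obj x) ≫ bf A hA x = (S : C ⥤ C).map (bf A hA x) ≫ bf A hA x :=
  b_assoc A hA (T.free.obj x)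

/-- The candidate monad morphism. -/
def α : S ⟶ T where
  app x := (S : C ⥤ C).map (T.η.app x) ≫ bf A hA x
  naturality x y f := by
    have h1 := bf_hom A hA f
    have h2 := T.η.naturality f
    dsimp at h2
    rw [assoc, ← h1, ← Functor.map_comp_assoc, ← Functor.map_comp_assoc, h2]
  app_η x := by
    dsimp
    have h1 := bf_unit A hA x
    rw [← S.η.naturality_assoc, h1]
    simp
  app_μ x := by
    dsimp
    have hμ : (S : C ⥤ C).map (T.μ.app x) ≫ bf A hA x =
        bf A hA ((T : C ⥤ C).obj x) ≫ T.μ.app x := by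
      have := b_hom A hA (X := T.free.obj ((T : C ⥤ C).obj x)) (Y := T.free.obj x)
        ⟨T.μ.app x, by exact T.assoc x⟩
      exact this
    have h3 := bf_assoc A hA x
    rw [← S.μ.naturality_assoc, h3]
    rw [assoc, assoc, ← hμ]
    simp only [← Functor.map_comp_assoc, assoc]
    simp

lemma b_eq (X : T.Algebra) : b A hA X = (α A hA).app X.A ≫ X.a := by
  have h : (S : C ⥤ C).map X.a ≫ b A hA X = bf A hA X.A ≫ X.a :=
    b_hom A hA (X := T.free.obj X.A) (Y := X) ⟨X.a, by exact X.assoc.symm⟩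
  show _ = ((S : C ⥤ C).map (T.η.app X.A) ≫ bf A hA X.A) ≫ X.a
  rw [assoc, ← h, ← Functor.map_comp_assoc, X.unit]
  simp

omit hA in
lemma alg_ext (P Q : S.Algebra) (h1 : P.A = Q.A)
    (h2 : P.a = (S : C ⥤ C).map (eqToHom h1) ≫ Q.a ≫ eqToHom h1.symm) : P = Q := by
  obtain ⟨P, p, _, _⟩ := P
  obtain ⟨Q, q, _, _⟩ := Q
  dsimp at h1
  subst h1
  simp only [eqToHom_refl, CategoryTheory.Functor.map_id, id_comp, comp_id] at h2
  subst h2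
  rfl

omit hA in
lemma eqToHom_f {P Q : S.Algebra} (h : P = Q) :
    (eqToHom h).f = eqToHom (congrArg Monad.Algebra.A h) := by
  subst h; rfl

end EMInducedAux

open EMInducedAux in
theorem em_functor_is_induced_by_monad_hom {C : Type u} [Category.{v} C]
    (S T : Monad C) (A : T.Algebra ⥤ S.Algebra)
    (hA : A ⋙ Monad.forget S = Monad.forget T) :
    ∃ α : S ⟶ T, A = Monad.algebraFunctorOfMonadHom α := by
  refine ⟨α A hA, ?_⟩
  have hobj : ∀ X : T.Algebra, A.obj X = (Monad.algebraFunctorOfMonadHom (α A hA)).obj X := by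
    intro X
    refine alg_ext _ _ (e A hA X) ?_
    have hb := b_eq A hA X
    dsimp [Monad.algebraFunctorOfMonadHom]
    rw [← hb]
    simp [b]
    erw [eqToHom_trans, eqToHom_refl, comp_id]
  refine CategoryTheory.Functor.ext hobj ?_
  intro X Y f
  ext
  rw [map_f A hA f]
  simp only [Monad.algebraFunctorOfMonadHom_map_f, Monad.Algebra.comp_f, eqToHom_f]
  rfl
end
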